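/- arXiv:1611.06928 — 2 statements merged into one kernel-verified Lean document; each statement's English description precedes it below -/
import Mathlib

section
/- (Memory lower bound, unrestricted case.) Fix a horizon H and a time t ≤ H. Let Z_1, …, Z_{t-1} and X_t, A_t be random variables on a common probability space, each taking values in a finite set, where Z_j takes values in a finite set 𝒵 and the pair at time t satisfies: there exist K ∈ ℕ, a memory function g : {1,…,H} × 𝒵 × {1,…,K} → {1,…,K}, and memory-state random variables defined recursively by Y_0 = 1 and Y_j = g(j, Z_j, Y_{j-1}) for 1 ≤ j ≤ t-1, such that the conditional distribution of A_t given (X_t, Z_{1:t-1}) coincides almost surely with the conditional distribution of A_t given (X_t, Y_{t-1}). Then for every k < t: I(A_t; Z_{1:k} | X_t, Z_{k+1:t-1}) ≤ log K. -/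
open MeasureTheory ProbabilityTheory Real BigOperators

namespace MemoryLens

/-- Probability of an event as a real number. -/
noncomputable def pr {Ω : Type*} [MeasurableSpace Ω] (μ : Measure Ω) (s : Set Ω) : ℝ :=
  (μ s).toReal

/-- Conditional probability `P(s | t)` as a real number. -/
noncomputable def condProb {Ω : Type*} [MeasurableSpace Ω] (μ : Measure Ω) (s t : Set Ω) : ℝ :=
  pr μ (s ∩ t) / pr μ t

/-- Shannon entropy (in nats) of a finite-valued random variable. -/
noncomputable def entropy {Ω S : Type*} [MeasurableSpace Ω] [Fintype S]
    (μ : Measure Ω) (X : Ω → S) : ℝ :=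
  ∑ x : S, Real.negMulLog (pr μ {ω | X ω = x})

/-- Conditional entropy `H(X | W)` of finite-valued random variables. -/
noncomputable def condEntropy {Ω S T : Type*} [MeasurableSpace Ω] [Fintype S] [Fintype T]
    (μ : Measure Ω) (X : Ω → S) (W : Ω → T) : ℝ :=
  entropy μ (fun ω => (X ω, W ω)) - entropy μ W

/-- Conditional mutual information `I(A ; B | W)` of finite-valued random variables,
defined via the standard entropy decomposition. -/
noncomputable def condMI {Ω α β γ : Type*} [MeasurableSpace Ω] [Fintype α] [Fintype β] [Fintype γ]
    (μ : Measure Ω) (A : Ω → α) (B : Ω → β) (W : Ω → γ) : ℝ :=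
  entropy μ (fun ω => (A ω, W ω)) + entropy μ (fun ω => (B ω, W ω))
    - entropy μ (fun ω => (A ω, B ω, W ω)) - entropy μ W

/-- All fibers (level sets) of a random variable are measurable. -/
def MeasFibers {Ω α : Type*} [MeasurableSpace Ω] (A : Ω → α) : Prop :=
  ∀ a, MeasurableSet {ω | A ω = a}

/-- `memFold g y0 n (z_1, …, z_n)` is the memory state `Y_n` obtained by starting in `y0`
and applying the memory function `g` along observations `z_1, …, z_n`. -/
def memFold {𝒵 M : Type*} (g : ℕ → 𝒵 → M → M) (y0 : M) : (n : ℕ) → (Fin n → 𝒵) → M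
  | 0, _ => y0
  | n + 1, zs => g (n + 1) (zs (Fin.last n)) (memFold g y0 n (fun j => zs j.castSucc))

/-- The memory state `Y_n` as a random variable: the result of recursively updating the memory
via `g` along the observations `Z_1, …, Z_n`, starting from `Y_0 = y0`. -/
def memState {Ω 𝒵 M : Type*} (g : ℕ → 𝒵 → M → M) (Z : ℕ → Ω → 𝒵) (y0 : M) (n : ℕ) (ω : Ω) : M :=
  memFold g y0 n (fun j => Z (1 + (j : ℕ)) ω)

end MemoryLens

namespace MemoryLens

lemma gibbs {ι : Type*} [Fintype ι] (p q : ι → ℝ)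
    (hp : ∀ i, 0 ≤ p i) (hq : ∀ i, 0 ≤ q i) (hpq : ∀ i, q i = 0 → p i = 0) :
    ∑ i, p i * Real.log (q i / p i) ≤ ∑ i, q i - ∑ i, p i := by
  rw [← Finset.sum_sub_distrib]
  apply Finset.sum_le_sum
  intro i _
  rcases eq_or_lt_of_le (hp i) with h0 | hpos
  · simp [← h0, hq i]
  · have hqpos : 0 < q i := lt_of_le_of_ne (hq i) (fun h => by
      have := hpq i h.symm; linarith)
    have hlog := Real.log_le_sub_one_of_pos (show (0:ℝ) < q i / p i from div_pos hqpos hpos)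
    have h1 : p i * Real.log (q i / p i) ≤ p i * (q i / p i - 1) := by nlinarith
    have h2 : p i * (q i / p i - 1) = q i - p i := by field_simp
    linarith

lemma negMulLog_sum_eq {ι : Type*} [Fintype ι] (x : ι → ℝ) :
    Real.negMulLog (∑ i, x i) = ∑ i, x i * (-(Real.log (∑ j, x j))) := by
  rw [Real.negMulLog, ← Finset.sum_mul]; ring

lemma sum3_rot {α β γ : Type*} [Fintype α] [Fintype β] [Fintype γ] (f : α → β → γ → ℝ) :
    ∑ b : β, ∑ w : γ, ∑ a : α, f a b w = ∑ a : α, ∑ b : β, ∑ w : γ, f a b w := by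
  have h1 : ∀ b : β, ∑ w : γ, ∑ a : α, f a b w = ∑ a : α, ∑ w : γ, f a b w :=
    fun b => Finset.sum_comm
  simp only [h1]
  exact Finset.sum_comm

lemma sum3_swap23 {α β γ : Type*} [Fintype α] [Fintype β] [Fintype γ] (f : α → β → γ → ℝ) :
    ∑ a : α, ∑ w : γ, ∑ b : β, f a b w = ∑ a : α, ∑ b : β, ∑ w : γ, f a b w :=
  Finset.sum_congr rfl fun a _ => Finset.sum_comm

section PmfCore
variable {α β γ : Type*} [Fintype α] [Fintype β] [Fintype γ]
  (p : α → β → γ → ℝ)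

/-- The conditional mutual information at pmf level, as a difference of entropies,
rewritten as a single sum. -/
lemma pmf_key (hp : ∀ a b w, 0 ≤ p a b w) :
    ((∑ a, ∑ w, Real.negMulLog (∑ b, p a b w))
        + ∑ b, ∑ w, Real.negMulLog (∑ a, p a b w))
      - ((∑ a, ∑ b, ∑ w, Real.negMulLog (p a b w))
        + ∑ w, Real.negMulLog (∑ a, ∑ b, p a b w))
    = ∑ a, ∑ b, ∑ w, -((p a b w) *
        Real.log ((∑ b', p a b' w) * (∑ a', p a' b w) / (∑ a', ∑ b', p a' b' w)
          / (p a b w))) := by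
  set pA : α → γ → ℝ := fun a w => ∑ b, p a b w with hpA
  set pB : β → γ → ℝ := fun b w => ∑ a, p a b w with hpB
  set pW : γ → ℝ := fun w => ∑ a, ∑ b, p a b w with hpW
  have hle : ∀ a b w, p a b w ≤ pA a w :=
    fun a b w => Finset.single_le_sum (fun b _ => hp a b w) (Finset.mem_univ b)
  have hleB : ∀ a b w, p a b w ≤ pB b w :=
    fun a b w => Finset.single_le_sum (fun a _ => hp a b w) (Finset.mem_univ a)
  have hpA0 : ∀ a w, 0 ≤ pA a w := fun a w => Finset.sum_nonneg fun b _ => hp a b w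
  have hleW : ∀ a w, pA a w ≤ pW w :=
    fun a w => Finset.single_le_sum (fun a _ => hpA0 a w) (Finset.mem_univ a)
  have e1 : ∑ a, ∑ w, Real.negMulLog (pA a w)
      = ∑ a, ∑ b, ∑ w, p a b w * (-(Real.log (pA a w))) := by
    refine Finset.sum_congr rfl fun a _ => ?_
    have h : ∀ w, Real.negMulLog (pA a w) = ∑ b, p a b w * (-(Real.log (pA a w))) :=
      fun w => negMulLog_sum_eq _
    simp only [h]
    exact Finset.sum_comm
  have e2 : ∑ b, ∑ w, Real.negMulLog (pB b w)
      = ∑ a, ∑ b, ∑ w, p a b w * (-(Real.log (pB b w))) := by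
    rw [← sum3_rot (fun a b w => p a b w * (-(Real.log (pB b w))))]
    refine Finset.sum_congr rfl fun b _ => Finset.sum_congr rfl fun w _ => ?_
    exact negMulLog_sum_eq _
  have e3 : ∑ w, Real.negMulLog (pW w)
      = ∑ a, ∑ b, ∑ w, p a b w * (-(Real.log (pW w))) := by
    have h : ∀ w, Real.negMulLog (pW w) = ∑ a, ∑ b, p a b w * (-(Real.log (pW w))) := by
      intro w
      rw [negMulLog_sum_eq (fun a => ∑ b, p a b w)]
      exact Finset.sum_congr rfl fun a _ => Finset.sum_mul _ _ _
    simp only [h]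
    rw [Finset.sum_comm]
    exact sum3_swap23 _
  have e4 : ∑ a, ∑ b, ∑ w, Real.negMulLog (p a b w)
      = ∑ a, ∑ b, ∑ w, p a b w * (-(Real.log (p a b w))) := by
    refine Finset.sum_congr rfl fun a _ => Finset.sum_congr rfl fun b _ =>
      Finset.sum_congr rfl fun w _ => ?_
    rw [Real.negMulLog]; ring
  rw [e1, e2, e3, e4]
  rw [← Finset.sum_add_distrib, ← Finset.sum_add_distrib, ← Finset.sum_sub_distrib]
  simp only [← Finset.sum_add_distrib, ← Finset.sum_sub_distrib]
  refine Finset.sum_congr rfl fun a _ => Finset.sum_congr rfl fun b _ =>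
    Finset.sum_congr rfl fun w _ => ?_
  rcases eq_or_lt_of_le (hp a b w) with h0 | hpos
  · simp [← h0]
  · have h1 : 0 < pA a w := lt_of_lt_of_le hpos (hle a b w)
    have h2 : 0 < pB b w := lt_of_lt_of_le hpos (hleB a b w)
    have h3 : 0 < pW w := lt_of_lt_of_le h1 (hleW a w)
    rw [Real.log_div (by positivity) (ne_of_gt hpos),
        Real.log_div (by positivity) (ne_of_gt h3),
        Real.log_mul (ne_of_gt h1) (ne_of_gt h2)]
    ring

lemma sum3_wfirst (f : α → β → γ → ℝ) :
    ∑ a : α, ∑ b : β, ∑ w : γ, f a b w = ∑ w : γ, ∑ a : α, ∑ b : β, f a b w := by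
  rw [← sum3_swap23 f]
  exact Finset.sum_comm

/-- `∑ Q = ∑ P` for the Gibbs comparison measure. -/
lemma pmf_sumQ (hp : ∀ a b w, 0 ≤ p a b w) :
    ∑ a, ∑ b, ∑ w, ((∑ b', p a b' w) * (∑ a', p a' b w) / (∑ a', ∑ b', p a' b' w))
      = ∑ a, ∑ b, ∑ w, p a b w := by
  rw [sum3_wfirst (fun a b w => (∑ b', p a b' w) * (∑ a', p a' b w) / (∑ a', ∑ b', p a' b' w)),
      sum3_wfirst (fun a b w => p a b w)]
  refine Finset.sum_congr rfl fun w _ => ?_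
  have h1 : ∀ a : α, ∑ b, ((∑ b', p a b' w) * (∑ a', p a' b w) / (∑ a', ∑ b', p a' b' w))
      = (∑ b', p a b' w) * (∑ b, ∑ a', p a' b w) / (∑ a', ∑ b', p a' b' w) := by
    intro a
    rw [← Finset.sum_div, ← Finset.mul_sum]
  simp only [h1]
  rw [← Finset.sum_div, ← Finset.sum_mul]
  have h2 : ∑ b : β, ∑ a', p a' b w = ∑ a', ∑ b', p a' b' w := Finset.sum_comm
  rw [h2]
  rcases eq_or_ne (∑ a', ∑ b', p a' b' w) 0 with h | h
  · rw [h]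
    simp
  · field_simp

/-- Nonnegativity of conditional mutual information at pmf level:
`H(A,B,W) + H(W) ≤ H(A,W) + H(B,W)`. -/
lemma pmf_condMI_nonneg (hp : ∀ a b w, 0 ≤ p a b w) :
    (∑ a, ∑ b, ∑ w, Real.negMulLog (p a b w)) + ∑ w, Real.negMulLog (∑ a, ∑ b, p a b w)
      ≤ (∑ a, ∑ w, Real.negMulLog (∑ b, p a b w))
        + ∑ b, ∑ w, Real.negMulLog (∑ a, p a b w) := by
  have key := pmf_key p hp
  set P : α × β × γ → ℝ := fun i => p i.1 i.2.1 i.2.2 with hPdef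
  set Q : α × β × γ → ℝ := fun i =>
    (∑ b', p i.1 b' i.2.2) * (∑ a', p a' i.2.1 i.2.2) / (∑ a', ∑ b', p a' b' i.2.2) with hQdef
  have hP0 : ∀ i, 0 ≤ P i := fun i => hp _ _ _
  have hQ0 : ∀ i, 0 ≤ Q i := fun i => div_nonneg (mul_nonneg
    (Finset.sum_nonneg fun b _ => hp _ _ _) (Finset.sum_nonneg fun a _ => hp _ _ _))
    (Finset.sum_nonneg fun a _ => Finset.sum_nonneg fun b _ => hp _ _ _)
  have hPQ : ∀ i, Q i = 0 → P i = 0 := by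
    rintro ⟨a, b, w⟩ hq0
    by_contra hne
    have hpos : 0 < p a b w := lt_of_le_of_ne (hp a b w) (Ne.symm hne)
    have h1 : 0 < ∑ b', p a b' w := lt_of_lt_of_le hpos
      (Finset.single_le_sum (fun b' _ => hp a b' w) (Finset.mem_univ b))
    have h2 : 0 < ∑ a', p a' b w := lt_of_lt_of_le hpos
      (Finset.single_le_sum (fun a' _ => hp a' b w) (Finset.mem_univ a))
    have h3 : 0 < ∑ a', ∑ b', p a' b' w := lt_of_lt_of_le h1
      (Finset.single_le_sum (fun a' _ => Finset.sum_nonneg fun b' _ => hp a' b' w)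
        (Finset.mem_univ a))
    have : 0 < Q (a, b, w) := div_pos (mul_pos h1 h2) h3
    rw [hq0] at this
    exact lt_irrefl 0 this
  have hg := gibbs P Q hP0 hQ0 hPQ
  have hsum : ∑ i, Q i = ∑ i, P i := by
    rw [hPdef, hQdef]
    simp only [Fintype.sum_prod_type]
    exact pmf_sumQ p hp
  have hkey2 : ∑ a, ∑ b, ∑ w, -((p a b w) *
      Real.log ((∑ b', p a b' w) * (∑ a', p a' b w) / (∑ a', ∑ b', p a' b' w)
        / (p a b w))) = ∑ i, -(P i * Real.log (Q i / P i)) := by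
    simp only [Fintype.sum_prod_type]
    rfl
  rw [hkey2] at key
  have h4 : ∑ i, -(P i * Real.log (Q i / P i)) = -∑ i, P i * Real.log (Q i / P i) := by
    rw [← Finset.sum_neg_distrib]
  rw [h4] at key
  linarith

/-- Under the conditional-independence factorization, the conditional mutual
information is nonpositive: `H(A,W) + H(B,W) ≤ H(A,B,W) + H(W)`. -/
lemma pmf_condMI_nonpos (hp : ∀ a b w, 0 ≤ p a b w)
    (hfact : ∀ a b w, p a b w * (∑ a', ∑ b', p a' b' w)
      = (∑ b', p a b' w) * (∑ a', p a' b w)) :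
    (∑ a, ∑ w, Real.negMulLog (∑ b, p a b w)) + ∑ b, ∑ w, Real.negMulLog (∑ a, p a b w)
      ≤ (∑ a, ∑ b, ∑ w, Real.negMulLog (p a b w))
        + ∑ w, Real.negMulLog (∑ a, ∑ b, p a b w) := by
  have key := pmf_key p hp
  have hz : ∑ a, ∑ b, ∑ w, -((p a b w) *
      Real.log ((∑ b', p a b' w) * (∑ a', p a' b w) / (∑ a', ∑ b', p a' b' w)
        / (p a b w))) = 0 := by
    refine Finset.sum_eq_zero fun a _ => Finset.sum_eq_zero fun b _ =>
      Finset.sum_eq_zero fun w _ => ?_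
    rcases eq_or_lt_of_le (hp a b w) with h0 | hpos
    · rw [← h0]; ring
    · have h3 : 0 < ∑ a', ∑ b', p a' b' w := lt_of_lt_of_le hpos
        (le_trans (Finset.single_le_sum (fun b' _ => hp a b' w) (Finset.mem_univ b))
          (Finset.single_le_sum (fun a' _ => Finset.sum_nonneg fun b' _ => hp a' b' w)
            (Finset.mem_univ a)))
    
      have : (∑ b', p a b' w) * (∑ a', p a' b w) / (∑ a', ∑ b', p a' b' w)
          / (p a b w) = 1 := by
        rw [← hfact a b w]
        field_simp
      rw [this, Real.log_one]
      ring
  rw [hz] at key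
  linarith

/-- Entropy is monotone under marginalization: `H(A) ≤ H(A,B)` at pmf level. -/
lemma pmf_mono {α' β' : Type*} [Fintype α'] [Fintype β'] (q : α' → β' → ℝ)
    (hq : ∀ a b, 0 ≤ q a b) :
    ∑ a, Real.negMulLog (∑ b, q a b) ≤ ∑ a, ∑ b, Real.negMulLog (q a b) := by
  refine Finset.sum_le_sum fun a _ => ?_
  rw [negMulLog_sum_eq]
  refine Finset.sum_le_sum fun b _ => ?_
  rw [Real.negMulLog]
  rcases eq_or_lt_of_le (hq a b) with h0 | hpos
  · rw [← h0]; simp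
  · have hS : q a b ≤ ∑ j, q a j :=
      Finset.single_le_sum (fun j _ => hq a j) (Finset.mem_univ b)
    have : Real.log (q a b) ≤ Real.log (∑ j, q a j) := Real.log_le_log hpos hS
    nlinarith

/-- Subadditivity of entropy: `H(B,W) ≤ H(B) + H(W)` at pmf level. -/
lemma pmf_subadd {β' γ' : Type*} [Fintype β'] [Fintype γ'] (q : β' → γ' → ℝ)
    (hq : ∀ b w, 0 ≤ q b w) (hsum : ∑ b, ∑ w, q b w = 1) :
    ∑ b, ∑ w, Real.negMulLog (q b w)
      ≤ (∑ b, Real.negMulLog (∑ w, q b w)) + ∑ w, Real.negMulLog (∑ b, q b w) := by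
  set P : β' × γ' → ℝ := fun i => q i.1 i.2 with hPdef
  set Q : β' × γ' → ℝ := fun i => (∑ w, q i.1 w) * (∑ b, q b i.2) with hQdef
  have hP0 : ∀ i, 0 ≤ P i := fun i => hq _ _
  have hQ0 : ∀ i, 0 ≤ Q i := fun i => mul_nonneg (Finset.sum_nonneg fun w _ => hq _ _)
    (Finset.sum_nonneg fun b _ => hq _ _)
  have hPQ : ∀ i, Q i = 0 → P i = 0 := by
    rintro ⟨b, w⟩ hq0
    by_contra hne
    have hpos : 0 < q b w := lt_of_le_of_ne (hq b w) (Ne.symm hne)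
    have h1 : 0 < ∑ w', q b w' := lt_of_lt_of_le hpos
      (Finset.single_le_sum (fun w' _ => hq b w') (Finset.mem_univ w))
    have h2 : 0 < ∑ b', q b' w := lt_of_lt_of_le hpos
      (Finset.single_le_sum (fun b' _ => hq b' w) (Finset.mem_univ b))
    have : 0 < Q (b, w) := mul_pos h1 h2
    rw [hq0] at this
    exact lt_irrefl 0 this
  have hg := gibbs P Q hP0 hQ0 hPQ
  have hsumP : ∑ i, P i = 1 := by rw [hPdef]; simpa [Fintype.sum_prod_type] using hsum
  have hsumQ : ∑ i, Q i = 1 := by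
    rw [hQdef]
    simp only [Fintype.sum_prod_type]
    have : ∀ b : β', ∑ w : γ', (∑ w', q b w') * (∑ b', q b' w)
        = (∑ w', q b w') * ∑ w, ∑ b', q b' w := fun b => by rw [← Finset.mul_sum]
    simp only [this]
    rw [← Finset.sum_mul]
    have h2 : ∑ w : γ', ∑ b', q b' w = 1 := by rw [Finset.sum_comm]; exact hsum
    rw [h2, hsum]; ring
  -- identity: H(B,W) - H(B) - H(W) = ∑ P log (Q/P)
  have eB : ∑ b, Real.negMulLog (∑ w, q b w)
      = ∑ b, ∑ w, q b w * (-(Real.log (∑ w', q b w'))) :=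
    Finset.sum_congr rfl fun b _ => negMulLog_sum_eq _
  have eW : ∑ w, Real.negMulLog (∑ b, q b w)
      = ∑ b, ∑ w, q b w * (-(Real.log (∑ b', q b' w))) := by
    rw [Finset.sum_comm]
    exact Finset.sum_congr rfl fun w _ => negMulLog_sum_eq _
  have eBW : ∑ b, ∑ w, Real.negMulLog (q b w)
      = ∑ b, ∑ w, q b w * (-(Real.log (q b w))) := by
    refine Finset.sum_congr rfl fun b _ => Finset.sum_congr rfl fun w _ => ?_
    rw [Real.negMulLog]; ring
  have hkey : ∑ b, ∑ w, Real.negMulLog (q b w)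
      - ((∑ b, Real.negMulLog (∑ w, q b w)) + ∑ w, Real.negMulLog (∑ b, q b w))
      = ∑ i, P i * Real.log (Q i / P i) := by
    rw [eB, eW, eBW]
    simp only [Fintype.sum_prod_type, ← Finset.sum_add_distrib, ← Finset.sum_sub_distrib]
    refine Finset.sum_congr rfl fun b _ => Finset.sum_congr rfl fun w _ => ?_
    simp only [hPdef, hQdef]
    rcases eq_or_lt_of_le (hq b w) with h0 | hpos
    · rw [← h0]; simp
    · have h1 : 0 < ∑ w', q b w' := lt_of_lt_of_le hpos
        (Finset.single_le_sum (fun w' _ => hq b w') (Finset.mem_univ w))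
      have h2 : 0 < ∑ b', q b' w := lt_of_lt_of_le hpos
        (Finset.single_le_sum (fun b' _ => hq b' w) (Finset.mem_univ b))
      show q b w * (-(Real.log (q b w))) - (q b w * (-(Real.log (∑ w', q b w')))
          + q b w * (-(Real.log (∑ b', q b' w))))
        = q b w * Real.log ((∑ w', q b w') * (∑ b', q b' w) / q b w)
      rw [Real.log_div (by positivity) (ne_of_gt hpos),
          Real.log_mul (ne_of_gt h1) (ne_of_gt h2)]
      ring
  rw [hsumP, hsumQ] at hg
  linarith [hkey, hg]

/-- Entropy is at most `log` of the cardinality. -/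
lemma pmf_le_log_card {ι : Type*} [Fintype ι] (q : ι → ℝ)
    (hq : ∀ i, 0 ≤ q i) (hsum : ∑ i, q i = 1) :
    ∑ i, Real.negMulLog (q i) ≤ Real.log (Fintype.card ι) := by
  have hne : Nonempty ι := by
    by_contra h
    rw [not_nonempty_iff] at h
    rw [Finset.sum_eq_zero (fun i _ => (h.elim i))] at hsum
    norm_num at hsum
  have hcard : (0 : ℝ) < Fintype.card ι := by
    have := Fintype.card_pos_iff.2 hne
    exact_mod_cast this
  set Q : ι → ℝ := fun _ => (Fintype.card ι : ℝ)⁻¹ with hQdef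
  have hg := gibbs q Q hq (fun i => by positivity)
    (fun i h => absurd h (by positivity))
  have hsumQ : ∑ i, Q i = 1 := by
    rw [hQdef, Finset.sum_const, Finset.card_univ, nsmul_eq_mul,
      mul_inv_cancel₀ (ne_of_gt hcard)]
  have hterm : ∀ i, Real.negMulLog (q i)
      = q i * Real.log (Q i / q i) + q i * Real.log (Fintype.card ι) := by
    intro i
    rcases eq_or_lt_of_le (hq i) with h0 | hpos
    · rw [← h0]; simp
    · rw [Real.negMulLog, hQdef]
      rw [Real.log_div (by positivity) (ne_of_gt hpos), Real.log_inv]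
      ring
  calc ∑ i, Real.negMulLog (q i)
      = ∑ i, (q i * Real.log (Q i / q i) + q i * Real.log (Fintype.card ι)) :=
        Finset.sum_congr rfl fun i _ => hterm i
    _ = (∑ i, q i * Real.log (Q i / q i)) + (∑ i, q i) * Real.log (Fintype.card ι) := by
        rw [Finset.sum_add_distrib, Finset.sum_mul]
    _ ≤ (1 - 1) + 1 * Real.log (Fintype.card ι) := by
        rw [hsum]
        have : ∑ i, q i * Real.log (Q i / q i) ≤ 1 - 1 := by
          rw [← hsumQ]
          have := hg
          rw [hsum] at this
          linarith [this, hsumQ]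
        linarith
    _ = Real.log (Fintype.card ι) := by ring

end PmfCore

section Bridge
variable {Ω : Type*} [MeasurableSpace Ω] (μ : Measure Ω) [IsProbabilityMeasure μ]

lemma pr_nonneg (s : Set Ω) : 0 ≤ pr μ s := ENNReal.toReal_nonneg

lemma pr_univ : pr μ (Set.univ : Set Ω) = 1 := by
  rw [pr, measure_univ, ENNReal.toReal_one]

lemma MeasFibers.setOf_eq {α : Type*} {A : Ω → α} (hA : MeasFibers A) (a : α) :
    MeasurableSet {ω | A ω = a} := hA a

lemma MeasFibers.pair {α β : Type*} {A : Ω → α} {B : Ω → β}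
    (hA : MeasFibers A) (hB : MeasFibers B) :
    MeasFibers (fun ω => (A ω, B ω)) := by
  rintro ⟨a, b⟩
  have : {ω | (A ω, B ω) = (a, b)} = {ω | A ω = a} ∩ {ω | B ω = b} := by
    ext ω; simp [Prod.ext_iff]
  rw [this]
  exact (hA a).inter (hB b)

lemma MeasFibers.comp {α β : Type*} [Fintype α] {A : Ω → α}
    (hA : MeasFibers A) (f : α → β) : MeasFibers (fun ω => f (A ω)) := by
  intro b
  have : {ω | f (A ω) = b} = ⋃ (a : α) (_ : f a = b), {ω | A ω = a} := by
    ext ω; simp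
  rw [this]
  exact MeasurableSet.iUnion fun a => MeasurableSet.iUnion fun _ => hA a

/-- Partitioning an event along the fibers of a finite-valued random variable. -/
lemma pr_sum_fiber {τ : Type*} [Fintype τ] {B : Ω → τ} (hB : MeasFibers B)
    {s : Set Ω} (hs : MeasurableSet s) :
    pr μ s = ∑ b, pr μ (s ∩ {ω | B ω = b}) := by
  have hdisj : ((Finset.univ : Finset τ) : Set τ).PairwiseDisjoint
      (fun b => s ∩ {ω | B ω = b}) := by
    intro b1 _ b2 _ hne
    refine Set.disjoint_left.2 fun ω h1 h2 => ?_
    exact hne (h1.2.symm.trans h2.2)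
  have hunion : ⋃ b ∈ (Finset.univ : Finset τ), (s ∩ {ω | B ω = b}) = s := by
    ext ω
    simp only [Set.mem_iUnion, Set.mem_inter_iff, Finset.mem_univ, exists_prop, true_and]
    exact ⟨fun ⟨b, h, _⟩ => h, fun h => ⟨B ω, h, rfl⟩⟩
  have := measure_biUnion_finset (μ := μ) hdisj (fun b _ => hs.inter (hB b))
  rw [hunion] at this
  rw [pr, this]
  rw [ENNReal.toReal_sum (fun b _ => measure_ne_top μ _)]
  rfl

lemma entropy_sum_univ {S : Type*} [Fintype S] {X : Ω → S} (hX : MeasFibers X) :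
    ∑ x, pr μ {ω | X ω = x} = 1 := by
  have h := pr_sum_fiber μ hX (MeasurableSet.univ (α := Ω))
  rw [pr_univ] at h
  calc ∑ x, pr μ {ω | X ω = x} = ∑ x, pr μ (Set.univ ∩ {ω | X ω = x}) := by
        simp [Set.univ_inter]
    _ = 1 := h.symm

lemma measSet_and {p q : Ω → Prop} (hp : MeasurableSet {ω | p ω})
    (hq : MeasurableSet {ω | q ω}) : MeasurableSet {ω | p ω ∧ q ω} := by
  have : {ω | p ω ∧ q ω} = {ω | p ω} ∩ {ω | q ω} := rfl
  rw [this]; exact hp.inter hq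

lemma entropy_pair_eq {α β : Type*} [Fintype α] [Fintype β] (A : Ω → α) (B : Ω → β) :
    entropy μ (fun ω => (A ω, B ω))
      = ∑ a, ∑ b, Real.negMulLog (pr μ {ω | A ω = a ∧ B ω = b}) := by
  rw [entropy, Fintype.sum_prod_type]
  refine Finset.sum_congr rfl fun a _ => Finset.sum_congr rfl fun b _ => ?_
  have : {ω | (A ω, B ω) = (a, b)} = {ω | A ω = a ∧ B ω = b} := by
    ext ω; simp [Prod.ext_iff]
  rw [this]

lemma entropy_triple_eq {α β γ : Type*} [Fintype α] [Fintype β] [Fintype γ]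
    (A : Ω → α) (B : Ω → β) (W : Ω → γ) :
    entropy μ (fun ω => (A ω, B ω, W ω))
      = ∑ a, ∑ b, ∑ w, Real.negMulLog (pr μ {ω | A ω = a ∧ B ω = b ∧ W ω = w}) := by
  rw [entropy, Fintype.sum_prod_type]
  refine Finset.sum_congr rfl fun a _ => ?_
  rw [Fintype.sum_prod_type]
  refine Finset.sum_congr rfl fun b _ => Finset.sum_congr rfl fun w _ => ?_
  have : {ω | (A ω, B ω, W ω) = (a, b, w)} = {ω | A ω = a ∧ B ω = b ∧ W ω = w} := by
    ext ω; simp [Prod.ext_iff]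
  rw [this]

section Marg
variable {α β γ : Type*} [Fintype α] [Fintype β] [Fintype γ]
  {A : Ω → α} {B : Ω → β} {W : Ω → γ}

lemma pr_marg_b (hA : MeasFibers A) (hB : MeasFibers B) (hW : MeasFibers W) (a : α) (w : γ) :
    pr μ {ω | A ω = a ∧ W ω = w} = ∑ b, pr μ {ω | A ω = a ∧ B ω = b ∧ W ω = w} := by
  rw [pr_sum_fiber μ hB (measSet_and (hA a) (hW w))]
  refine Finset.sum_congr rfl fun b _ => ?_
  congr 1
  ext ω; simp only [Set.mem_inter_iff, Set.mem_setOf_eq]; tauto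

lemma pr_marg_a (hA : MeasFibers A) (hB : MeasFibers B) (hW : MeasFibers W) (b : β) (w : γ) :
    pr μ {ω | B ω = b ∧ W ω = w} = ∑ a, pr μ {ω | A ω = a ∧ B ω = b ∧ W ω = w} := by
  rw [pr_sum_fiber μ hA (measSet_and (hB b) (hW w))]
  refine Finset.sum_congr rfl fun a _ => ?_
  congr 1
  ext ω; simp only [Set.mem_inter_iff, Set.mem_setOf_eq]; tauto

lemma pr_marg_ab (hA : MeasFibers A) (hB : MeasFibers B) (hW : MeasFibers W) (w : γ) :
    pr μ {ω | W ω = w} = ∑ a, ∑ b, pr μ {ω | A ω = a ∧ B ω = b ∧ W ω = w} := by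
  rw [pr_sum_fiber μ hA (hW w)]
  refine Finset.sum_congr rfl fun a _ => ?_
  have h1 : {ω | W ω = w} ∩ {ω | A ω = a} = {ω | A ω = a ∧ W ω = w} := by
    ext ω; simp only [Set.mem_inter_iff, Set.mem_setOf_eq]; tauto
  rw [h1, pr_marg_b μ hA hB hW]

/-- Conditional mutual information expressed through the joint pmf. -/
lemma condMI_eq_pmf (hA : MeasFibers A) (hB : MeasFibers B) (hW : MeasFibers W) :
    condMI μ A B W
      = ((∑ a, ∑ w, Real.negMulLog (∑ b, pr μ {ω | A ω = a ∧ B ω = b ∧ W ω = w}))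
        + ∑ b, ∑ w, Real.negMulLog (∑ a, pr μ {ω | A ω = a ∧ B ω = b ∧ W ω = w}))
      - ((∑ a, ∑ b, ∑ w, Real.negMulLog (pr μ {ω | A ω = a ∧ B ω = b ∧ W ω = w}))
        + ∑ w, Real.negMulLog (∑ a, ∑ b, pr μ {ω | A ω = a ∧ B ω = b ∧ W ω = w})) := by
  rw [condMI, entropy_pair_eq μ A W, entropy_pair_eq μ B W, entropy_triple_eq μ A B W]
  have hW' : entropy μ W = ∑ w, Real.negMulLog (pr μ {ω | W ω = w}) := rfl
  rw [hW']
  have e1 : ∀ a w, pr μ {ω | A ω = a ∧ W ω = w}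
      = ∑ b, pr μ {ω | A ω = a ∧ B ω = b ∧ W ω = w} := fun a w => pr_marg_b μ hA hB hW a w
  have e2 : ∀ b w, pr μ {ω | B ω = b ∧ W ω = w}
      = ∑ a, pr μ {ω | A ω = a ∧ B ω = b ∧ W ω = w} := fun b w => pr_marg_a μ hA hB hW b w
  have e3 : ∀ w, pr μ {ω | W ω = w}
      = ∑ a, ∑ b, pr μ {ω | A ω = a ∧ B ω = b ∧ W ω = w} := fun w => pr_marg_ab μ hA hB hW w
  simp only [e1, e2, e3]
  ring

lemma condMI_nonneg (hA : MeasFibers A) (hB : MeasFibers B) (hW : MeasFibers W) : 0 ≤ condMI μ A B W := by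
  rw [condMI_eq_pmf μ hA hB hW]
  have := pmf_condMI_nonneg (fun a b w => pr μ {ω | A ω = a ∧ B ω = b ∧ W ω = w})
    (fun a b w => pr_nonneg μ _)
  linarith

lemma condMI_nonpos_of_factor (hA : MeasFibers A) (hB : MeasFibers B) (hW : MeasFibers W)
    (hfact : ∀ a b w, pr μ {ω | A ω = a ∧ B ω = b ∧ W ω = w} * pr μ {ω | W ω = w}
      = pr μ {ω | A ω = a ∧ W ω = w} * pr μ {ω | B ω = b ∧ W ω = w}) :
    condMI μ A B W ≤ 0 := by
  rw [condMI_eq_pmf μ hA hB hW]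
  have := pmf_condMI_nonpos (fun a b w => pr μ {ω | A ω = a ∧ B ω = b ∧ W ω = w})
    (fun a b w => pr_nonneg μ _) (fun a b w => by
      have h := hfact a b w
      rwa [pr_marg_ab μ hA hB hW, pr_marg_b μ hA hB hW, pr_marg_a μ hA hB hW] at h)
  linarith

end Marg

lemma entropy_comp_inj {S T : Type*} [Fintype S] [Fintype T] [DecidableEq T] (X : Ω → S)
    (f : S → T) (hf : Function.Injective f) :
    entropy μ (fun ω => f (X ω)) = entropy μ X := by
  rw [entropy, entropy]
  rw [← Finset.sum_subset (Finset.subset_univ (Finset.univ.image f))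
    (fun t _ ht => ?_)]
  · rw [Finset.sum_image (fun s _ s' _ h => hf h)]
    refine Finset.sum_congr rfl fun s _ => ?_
    have : {ω | f (X ω) = f s} = {ω | X ω = s} := by
      ext ω; exact hf.eq_iff
    rw [this]
  · have : {ω | f (X ω) = t} = ∅ := by
      ext ω
      simp only [Set.mem_setOf_eq, Set.mem_empty_iff_false, iff_false]
      intro h
      exact ht (Finset.mem_image.2 ⟨X ω, Finset.mem_univ _, h⟩)
    rw [this]
    simp [pr]

lemma entropy_pair_le {β γ : Type*} [Fintype β] [Fintype γ] {P : Ω → β} {Q : Ω → γ}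
    (hP : MeasFibers P) (hQ : MeasFibers Q) :
    entropy μ (fun ω => (P ω, Q ω)) ≤ entropy μ P + entropy μ Q := by
  rw [entropy_pair_eq μ P Q]
  have eP : entropy μ P = ∑ b, Real.negMulLog (∑ w, pr μ {ω | P ω = b ∧ Q ω = w}) := by
    rw [entropy]
    refine Finset.sum_congr rfl fun b _ => ?_
    congr 1
    rw [pr_sum_fiber μ hQ (hP b)]
    refine Finset.sum_congr rfl fun w _ => ?_
    congr 1
  have eQ : entropy μ Q = ∑ w, Real.negMulLog (∑ b, pr μ {ω | P ω = b ∧ Q ω = w}) := by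
    rw [entropy]
    refine Finset.sum_congr rfl fun w _ => ?_
    congr 1
    rw [pr_sum_fiber μ hP (hQ w)]
    refine Finset.sum_congr rfl fun b _ => ?_
    congr 1
    ext ω; simp only [Set.mem_inter_iff, Set.mem_setOf_eq]; tauto
  rw [eP, eQ]
  refine pmf_subadd _ (fun b w => pr_nonneg μ _) ?_
  have : ∀ b, ∑ w, pr μ {ω | P ω = b ∧ Q ω = w} = pr μ {ω | P ω = b} := by
    intro b
    rw [pr_sum_fiber μ hQ (hP b)]
    refine Finset.sum_congr rfl fun w _ => ?_
    congr 1
  simp only [this]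
  exact entropy_sum_univ μ hP

lemma entropy_fst_le {β γ : Type*} [Fintype β] [Fintype γ] {P : Ω → β} {Q : Ω → γ}
    (hP : MeasFibers P) (hQ : MeasFibers Q) :
    entropy μ P ≤ entropy μ (fun ω => (P ω, Q ω)) := by
  rw [entropy_pair_eq μ P Q]
  have eP : entropy μ P = ∑ b, Real.negMulLog (∑ w, pr μ {ω | P ω = b ∧ Q ω = w}) := by
    rw [entropy]
    refine Finset.sum_congr rfl fun b _ => ?_
    congr 1
    rw [pr_sum_fiber μ hQ (hP b)]
    refine Finset.sum_congr rfl fun w _ => ?_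
    congr 1
  rw [eP]
  exact pmf_mono _ (fun b w => pr_nonneg μ _)

lemma entropy_le_log_card {S : Type*} [Fintype S] {Y : Ω → S} (hY : MeasFibers Y) :
    entropy μ Y ≤ Real.log (Fintype.card S) :=
  pmf_le_log_card _ (fun y => pr_nonneg μ _) (entropy_sum_univ μ hY)


end Bridge

section Glue
variable {𝒵 : Type*}

/-- Glue a prefix `b : Fin k → 𝒵` and a suffix `w : Fin (T-k) → 𝒵` into a full
sequence `Fin T → 𝒵`. -/
def glue (k T : ℕ) (hkT : k ≤ T) (b : Fin k → 𝒵) (w : Fin (T - k) → 𝒵) : Fin T → 𝒵 :=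
  fun j => if h : (j : ℕ) < k then b ⟨j, h⟩ else w ⟨(j : ℕ) - k, by omega⟩

lemma glue_spec {Ω : Type*} (Z : ℕ → Ω → 𝒵) (k T : ℕ) (hkT : k ≤ T)
    (b : Fin k → 𝒵) (w : Fin (T - k) → 𝒵) (ω : Ω) :
    ((fun j : Fin k => Z (1 + (j : ℕ)) ω) = b
        ∧ (fun j : Fin (T - k) => Z (k + 1 + (j : ℕ)) ω) = w)
      ↔ (fun j : Fin T => Z (1 + (j : ℕ)) ω) = glue k T hkT b w := by
  constructor
  · rintro ⟨hb, hw⟩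
    funext j
    by_cases h : (j : ℕ) < k
    · rw [glue]
      simp only [dif_pos h]
      exact congrFun hb ⟨(j : ℕ), h⟩
    · rw [glue]
      simp only [dif_neg h]
      have hidx : k + 1 + ((j : ℕ) - k) = 1 + (j : ℕ) := by omega
      rw [← hidx]
      exact congrFun hw ⟨(j : ℕ) - k, by omega⟩
  · intro hz
    constructor
    · funext i
      have h1 := congrFun hz ⟨(i : ℕ), by omega⟩
      rw [glue] at h1
      simp only [dif_pos i.isLt] at h1
      simpa using h1
    · funext i
      have hik : (i : ℕ) < T - k := i.isLt
      have h1 := congrFun hz ⟨k + (i : ℕ), by omega⟩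
      rw [glue] at h1
      have hnk : ¬ ((⟨k + (i : ℕ), by omega⟩ : Fin T) : ℕ) < k := by simp
      simp only [dif_neg hnk] at h1
      have hidx : 1 + (k + (i : ℕ)) = k + 1 + (i : ℕ) := by omega
      have h2 : (⟨((⟨k + (i : ℕ), by omega⟩ : Fin T) : ℕ) - k, by omega⟩ : Fin (T - k)) = i := by
        apply Fin.ext
        simp
      rw [h2] at h1
      rw [← hidx]
      exact h1

end Glue

section Tuple
variable {Ω 𝒵 : Type*} [MeasurableSpace Ω]

lemma measFibers_tuple {Z : ℕ → Ω → 𝒵} (hZ : ∀ i, MeasFibers (Z i))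
    (n : ℕ) (f : Fin n → ℕ) : MeasFibers (fun ω => fun j : Fin n => Z (f j) ω) := by
  intro zs
  have : {ω | (fun j : Fin n => Z (f j) ω) = zs} = ⋂ j, {ω | Z (f j) ω = zs j} := by
    ext ω
    simp [funext_iff]
  rw [this]
  exact MeasurableSet.iInter fun j => hZ (f j) (zs j)

end Tuple

section Main
variable {Ω α γ 𝒵 : Type*} [MeasurableSpace Ω] [Fintype α] [Fintype γ] [Fintype 𝒵]

theorem main_aux (μ : Measure Ω) [IsProbabilityMeasure μ]
    (T k : ℕ) (hkT : k ≤ T)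
    (A : Ω → α) (X : Ω → γ) (Z : ℕ → Ω → 𝒵)
    (hA : MeasFibers A) (hX : MeasFibers X) (hZ : ∀ i, MeasFibers (Z i))
    (K : ℕ) (hK : 0 < K) (g : ℕ → 𝒵 → Fin K → Fin K)
    (hci : ∀ (a : α) (x : γ) (zs : Fin T → 𝒵),
      μ {ω | X ω = x ∧ (fun j : Fin T => Z (1 + (j : ℕ)) ω) = zs} ≠ 0 →
      condProb μ {ω | A ω = a}
          {ω | X ω = x ∧ (fun j : Fin T => Z (1 + (j : ℕ)) ω) = zs}
        = condProb μ {ω | A ω = a}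
          {ω | X ω = x ∧ memState g Z ⟨0, hK⟩ T ω = memFold g ⟨0, hK⟩ T zs}) :
    condMI μ A (fun ω => fun j : Fin k => Z (1 + (j : ℕ)) ω)
        (fun ω => (X ω, fun j : Fin (T - k) => Z (k + 1 + (j : ℕ)) ω))
      ≤ Real.log K := by
  classical
  set y0 : Fin K := ⟨0, hK⟩ with hy0def
  set B : Ω → (Fin k → 𝒵) := fun ω => fun j : Fin k => Z (1 + (j : ℕ)) ω with hBdef
  set Zr : Ω → (Fin (T - k) → 𝒵) := fun ω => fun j : Fin (T - k) => Z (k + 1 + (j : ℕ)) ω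
    with hZrdef
  set W : Ω → γ × (Fin (T - k) → 𝒵) := fun ω => (X ω, Zr ω) with hWdef
  set Y : Ω → Fin K := memState g Z y0 T with hYdef
  -- measurability of all fibers
  have hB : MeasFibers B := measFibers_tuple hZ k _
  have hZr : MeasFibers Zr := measFibers_tuple hZ (T - k) _
  have hZf : MeasFibers (fun ω => fun j : Fin T => Z (1 + (j : ℕ)) ω) :=
    measFibers_tuple hZ T _
  have hW : MeasFibers W := hX.pair hZr
  have hY : MeasFibers Y := hZf.comp (memFold g y0 T)
  have hBW : MeasFibers (fun ω => (B ω, W ω)) := hB.pair hW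
  have hYW : MeasFibers (fun ω => (Y ω, W ω)) := hY.pair hW
  -- re-association equalities of entropies
  have e1 : entropy μ (fun ω => (Y ω, B ω, W ω))
      = entropy μ (fun ω => ((B ω, Y ω), W ω)) :=
    entropy_comp_inj μ (fun ω => ((B ω, Y ω), W ω))
      (fun p => (p.1.2, (p.1.1, p.2)))
      (Function.LeftInverse.injective (g := fun q => ((q.2.1, q.1), q.2.2)) (fun p => rfl))
  have e2 : entropy μ (fun ω => (A ω, (B ω, Y ω), W ω))
      = entropy μ (fun ω => (A ω, Y ω, B ω, W ω)) :=
    entropy_comp_inj μ (fun ω => (A ω, Y ω, B ω, W ω))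
      (fun p => (p.1, ((p.2.2.1, p.2.1), p.2.2.2)))
      (Function.LeftInverse.injective (g := fun q => (q.1, (q.2.1.2, (q.2.1.1, q.2.2))))
        (fun p => rfl))
  have e3 : entropy μ (fun ω => (B ω, Y ω, W ω))
      = entropy μ (fun ω => ((B ω, Y ω), W ω)) :=
    entropy_comp_inj μ (fun ω => ((B ω, Y ω), W ω))
      (fun p => (p.1.1, (p.1.2, p.2)))
      (Function.LeftInverse.injective (g := fun q => ((q.1, q.2.1), q.2.2)) (fun p => rfl))
  have e4 : entropy μ (fun ω => (A ω, B ω, Y ω, W ω))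
      = entropy μ (fun ω => (A ω, (B ω, Y ω), W ω)) :=
    entropy_comp_inj μ (fun ω => (A ω, (B ω, Y ω), W ω))
      (fun p => (p.1, (p.2.1.1, (p.2.1.2, p.2.2))))
      (Function.LeftInverse.injective (g := fun q => (q.1, ((q.2.1, q.2.2.1), q.2.2.2)))
        (fun p => rfl))
  -- chain rule identities
  have c1 : condMI μ A (fun ω => (B ω, Y ω)) W
      = condMI μ A B W + condMI μ A Y (fun ω => (B ω, W ω)) := by
    simp only [condMI]
    rw [← e1, ← e2]
    ring
  have c2 : condMI μ A (fun ω => (B ω, Y ω)) W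
      = condMI μ A Y W + condMI μ A B (fun ω => (Y ω, W ω)) := by
    simp only [condMI]
    rw [← e3, ← e4]
    ring
  -- bound on condMI μ A Y W
  have m1 : entropy μ (fun ω => (A ω, W ω)) ≤ entropy μ (fun ω => (A ω, Y ω, W ω)) := by
    have h1 : entropy μ (fun ω => (A ω, W ω))
        ≤ entropy μ (fun ω => ((A ω, W ω), Y ω)) :=
      entropy_fst_le μ (hA.pair hW) hY
    have h2 : entropy μ (fun ω => ((A ω, W ω), Y ω))
        = entropy μ (fun ω => (A ω, Y ω, W ω)) :=
      entropy_comp_inj μ (fun ω => (A ω, Y ω, W ω))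
        (fun p => ((p.1, p.2.2), p.2.1))
        (Function.LeftInverse.injective (g := fun q => (q.1.1, (q.2, q.1.2))) (fun p => rfl))
    linarith
  have m2 : entropy μ (fun ω => (Y ω, W ω)) ≤ entropy μ Y + entropy μ W :=
    entropy_pair_le μ hY hW
  have c5 : condMI μ A Y W ≤ entropy μ Y := by
    simp only [condMI]
    linarith
  have h6 : entropy μ Y ≤ Real.log K := by
    have h := entropy_le_log_card μ hY
    rwa [Fintype.card_fin] at h
  have h7 : 0 ≤ condMI μ A Y (fun ω => (B ω, W ω)) := condMI_nonneg μ hA hY hBW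
  have step1 : ∀ (a : α) (x : γ) (zs : Fin T → 𝒵),
      pr μ {ω | A ω = a ∧ X ω = x ∧ (fun j : Fin T => Z (1 + (j : ℕ)) ω) = zs}
        = condProb μ {ω | A ω = a}
            {ω | X ω = x ∧ memState g Z y0 T ω = memFold g y0 T zs}
          * pr μ {ω | X ω = x ∧ (fun j : Fin T => Z (1 + (j : ℕ)) ω) = zs} := by
    intro a x zs
    by_cases h0 : μ {ω | X ω = x ∧ (fun j : Fin T => Z (1 + (j : ℕ)) ω) = zs} = 0
    · have hsub : {ω | A ω = a ∧ X ω = x ∧ (fun j : Fin T => Z (1 + (j : ℕ)) ω) = zs}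
          ⊆ {ω | X ω = x ∧ (fun j : Fin T => Z (1 + (j : ℕ)) ω) = zs} := fun ω h => h.2
      have h1 : μ {ω | A ω = a ∧ X ω = x ∧ (fun j : Fin T => Z (1 + (j : ℕ)) ω) = zs} = 0 :=
        measure_mono_null hsub h0
      rw [pr, pr, h0, h1]
      simp
    · have h := hci a x zs h0
      have hne : pr μ {ω | X ω = x ∧ (fun j : Fin T => Z (1 + (j : ℕ)) ω) = zs} ≠ 0 := by
        rw [pr]
        exact ENNReal.toReal_ne_zero.2 ⟨h0, measure_ne_top μ _⟩
      rw [condProb] at h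
      have hset : {ω | A ω = a} ∩ {ω | X ω = x ∧ (fun j : Fin T => Z (1 + (j : ℕ)) ω) = zs}
          = {ω | A ω = a ∧ X ω = x ∧ (fun j : Fin T => Z (1 + (j : ℕ)) ω) = zs} := rfl
      rw [hset, div_eq_iff hne] at h
      exact h
  have h8 : condMI μ A B (fun ω => (Y ω, W ω)) ≤ 0 := by
    refine condMI_nonpos_of_factor μ hA hB hYW ?_
    rintro a b ⟨y, x, w⟩
    set q : ℝ := condProb μ {ω | A ω = a} {ω | X ω = x ∧ Y ω = y} with hqdef
    set r : (Fin k → 𝒵) → ℝ := fun b' =>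
      pr μ {ω | X ω = x ∧ (fun j : Fin T => Z (1 + (j : ℕ)) ω) = glue k T hkT b' w} with hrdef
    set e : (Fin k → 𝒵) → ℝ := fun b' =>
      if memFold g y0 T (glue k T hkT b' w) = y then r b' else 0 with hedef
    have hYmem : ∀ ω, Y ω = memFold g y0 T (fun j : Fin T => Z (1 + (j : ℕ)) ω) := fun ω => rfl
    -- the (B, rest)-fiber description
    have hmem : ∀ (b' : Fin k → 𝒵) (ω : Ω), (B ω = b' ∧ (Y ω, W ω) = (y, x, w))
        ↔ (X ω = x ∧ (fun j : Fin T => Z (1 + (j : ℕ)) ω) = glue k T hkT b' w)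
          ∧ memFold g y0 T (glue k T hkT b' w) = y := by
      intro b' ω
      simp only [Prod.mk.injEq, hWdef, hBdef, hZrdef]
      constructor
      · rintro ⟨hb, hyy, hx, hw⟩
        have hz := (glue_spec Z k T hkT b' w ω).1 ⟨hb, hw⟩
        refine ⟨⟨hx, hz⟩, ?_⟩
        rw [← hz, ← hYmem ω, hyy]
      · rintro ⟨⟨hx, hz⟩, hc⟩
        obtain ⟨hb, hw⟩ := (glue_spec Z k T hkT b' w ω).2 hz
        refine ⟨hb, ?_, hx, hw⟩
        rw [hYmem ω, hz, hc]
    have cB : ∀ b' : Fin k → 𝒵, pr μ {ω | B ω = b' ∧ (Y ω, W ω) = (y, x, w)} = e b' := by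
      intro b'
      by_cases hc : memFold g y0 T (glue k T hkT b' w) = y
      · have hset : {ω | B ω = b' ∧ (Y ω, W ω) = (y, x, w)}
            = {ω | X ω = x ∧ (fun j : Fin T => Z (1 + (j : ℕ)) ω) = glue k T hkT b' w} := by
          ext ω
          rw [Set.mem_setOf_eq, Set.mem_setOf_eq, hmem b' ω]
          exact ⟨fun h => h.1, fun h => ⟨h, hc⟩⟩
        rw [hset, hedef]
        simp only [if_pos hc, hrdef]
      · have hset : {ω | B ω = b' ∧ (Y ω, W ω) = (y, x, w)} = ∅ := by
          ext ω
          rw [Set.mem_setOf_eq]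
          simp only [Set.mem_empty_iff_false, iff_false]
          intro hcon
          exact hc ((hmem b' ω).1 hcon).2
        rw [hset, hedef]
        simp only [if_neg hc, pr, measure_empty, ENNReal.toReal_zero]
    have cAB : ∀ b' : Fin k → 𝒵,
        pr μ {ω | A ω = a ∧ B ω = b' ∧ (Y ω, W ω) = (y, x, w)} = q * e b' := by
      intro b'
      by_cases hc : memFold g y0 T (glue k T hkT b' w) = y
      · have hset : {ω | A ω = a ∧ B ω = b' ∧ (Y ω, W ω) = (y, x, w)}
            = {ω | A ω = a ∧ X ω = x
                ∧ (fun j : Fin T => Z (1 + (j : ℕ)) ω) = glue k T hkT b' w} := by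
          ext ω
          rw [Set.mem_setOf_eq, Set.mem_setOf_eq, and_congr_right_iff]
          intro _
          rw [hmem b' ω]
          exact ⟨fun h => h.1, fun h => ⟨h, hc⟩⟩
        rw [hset, step1 a x (glue k T hkT b' w), hc]
        rw [hedef]
        simp only [if_pos hc, hrdef, hqdef, hYdef]
      · have hset : {ω | A ω = a ∧ B ω = b' ∧ (Y ω, W ω) = (y, x, w)} = ∅ := by
          ext ω
          rw [Set.mem_setOf_eq]
          simp only [Set.mem_empty_iff_false, iff_false]
          rintro ⟨_, hcon⟩
          exact hc ((hmem b' ω).1 hcon).2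
        rw [hset, hedef]
        simp only [if_neg hc, mul_zero, pr, measure_empty, ENNReal.toReal_zero]
    have cV : pr μ {ω | (Y ω, W ω) = (y, x, w)} = ∑ b', e b' := by
      rw [pr_sum_fiber μ hB (hYW (y, x, w))]
      refine Finset.sum_congr rfl fun b' _ => ?_
      rw [← cB b']
      congr 1
      ext ω
      simp only [Set.mem_inter_iff, Set.mem_setOf_eq]
      tauto
    have cA : pr μ {ω | A ω = a ∧ (Y ω, W ω) = (y, x, w)} = q * ∑ b', e b' := by
      rw [pr_sum_fiber μ hB (measSet_and (hA a) (hYW (y, x, w))), Finset.mul_sum]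
      refine Finset.sum_congr rfl fun b' _ => ?_
      rw [← cAB b']
      congr 1
      ext ω
      simp only [Set.mem_inter_iff, Set.mem_setOf_eq]
      tauto
    rw [cAB b, cV, cA, cB b]
    ring
  linarith

end Main

end MemoryLens


/-- memory lower bound, unrestricted case. If the agent's action `A_t` is
conditionally independent of the full history `Z_{1:t-1}` given `(X_t, Y_{t-1})`, where the
memory states satisfy `Y_0 = 1` and `Y_j = g(j, Z_j, Y_{j-1})` for a memory function
`g : {1,…,H} × 𝒵 × {1,…,K} → {1,…,K}`, then for every `k < t`:
`I(A_t; Z_{1:k} | X_t, Z_{k+1:t-1}) ≤ log K`. -/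
theorem memory_lens_lower_bound
    {Ω α γ 𝒵 : Type*} [MeasurableSpace Ω]
    [Fintype α] [Fintype γ] [Fintype 𝒵]
    (μ : MeasureTheory.Measure Ω) [MeasureTheory.IsProbabilityMeasure μ]
    (H t : ℕ) (ht : t ≤ H) (ht1 : 1 ≤ t)
    (A : Ω → α) (X : Ω → γ) (Z : ℕ → Ω → 𝒵)
    (hA : MemoryLens.MeasFibers A) (hX : MemoryLens.MeasFibers X)
    (hZ : ∀ i, MemoryLens.MeasFibers (Z i))
    (K : ℕ) (hK : 0 < K) (g : ℕ → 𝒵 → Fin K → Fin K)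
    (hci : ∀ (a : α) (x : γ) (zs : Fin (t - 1) → 𝒵),
      μ {ω | X ω = x ∧ (fun j : Fin (t - 1) => Z (1 + (j : ℕ)) ω) = zs} ≠ 0 →
      MemoryLens.condProb μ {ω | A ω = a}
          {ω | X ω = x ∧ (fun j : Fin (t - 1) => Z (1 + (j : ℕ)) ω) = zs}
        = MemoryLens.condProb μ {ω | A ω = a}
          {ω | X ω = x ∧
            MemoryLens.memState g Z ⟨0, hK⟩ (t - 1) ω = MemoryLens.memFold g ⟨0, hK⟩ (t - 1) zs}) :
    ∀ k < t,
      MemoryLens.condMI μ A (fun ω => fun j : Fin k => Z (1 + (j : ℕ)) ω)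
        (fun ω => (X ω, fun j : Fin (t - 1 - k) => Z (k + 1 + (j : ℕ)) ω))
      ≤ Real.log K := by
  intro k hk
  exact MemoryLens.main_aux μ (t - 1) k (by omega) A X Z hA hX hZ K hK g hci
end

section
/- (Theorem 1, lower bound with event restriction.) Fix a horizon H and a time t ≤ H. Let Z_1, …, Z_{t-1}, X_t, A_t be random variables on a common probability space (Ω, 𝔉, P), each taking values in a finite set, and let E ∈ σ(Z_{1:t-1}, X_t) be an event of positive probability in the sigma-field generated by the history up to time t−1 and the observation at time t; write P_E for the probability measure P conditioned (restricted and normalized) to E. Suppose there exist K ∈ ℕ, a memory function g : {1,…,H} × 𝒵 × {1,…,K} → {1,…,K}, and memory states defined recursively by Y_0 = 1 and Y_j = g(j, Z_j, Y_{j-1}), such that the conditional distribution of A_t given (X_t, Z_{1:t-1}) under P equals almost surely that of A_t given (X_t, Y_{t-1}). Then for every k < t: I_E(A_t; Z_{1:k} | X_t, Z_{k+1:t-1}) ≤ log |Y_k(Ω)| ≤ log K, where I_E denotes conditional mutual information computed with respect to P_E and Y_k(Ω) is the set of values attained by the memory state Y_k. -/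
open MeasureTheory ProbabilityTheory Real BigOperators

section MemoryLensAux
open MemoryLens

set_option linter.unusedSectionVars false

namespace MemoryLensAux

variable {Ω : Type*} [MeasurableSpace Ω] (ν : Measure Ω) [IsProbabilityMeasure ν]

lemma pr_nonneg (s : Set Ω) : 0 ≤ pr ν s := ENNReal.toReal_nonneg

lemma pr_mono {s t : Set Ω} (h : s ⊆ t) : pr ν s ≤ pr ν t :=
  ENNReal.toReal_mono (measure_ne_top ν t) (measure_mono h)

lemma pr_univ : pr ν (Set.univ : Set Ω) = 1 := by simp [pr]

lemma pr_eq_zero_of_subset {s t : Set Ω} (h : s ⊆ t) (ht : pr ν t = 0) : pr ν s = 0 :=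
  le_antisymm (ht ▸ pr_mono ν h) (pr_nonneg ν s)

lemma pr_inter_mem_finset {δ : Type*} {D : Ω → δ} (hD : MeasFibers D)
    {s : Set Ω} (hs : MeasurableSet s) (F : Finset δ) :
    pr ν (s ∩ {ω | D ω ∈ F}) = ∑ d ∈ F, pr ν (s ∩ {ω | D ω = d}) := by
  have h1 : s ∩ {ω | D ω ∈ F} = ⋃ d ∈ F, s ∩ {ω | D ω = d} := by
    ext ω
    simp only [Set.mem_inter_iff, Set.mem_setOf_eq, Set.mem_iUnion]
    constructor
    · rintro ⟨h1, h2⟩; exact ⟨D ω, h2, h1, rfl⟩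
    · rintro ⟨d, hd, h1, h2⟩; exact ⟨h1, h2 ▸ hd⟩
  have hdisj : (F : Set δ).PairwiseDisjoint (fun d => s ∩ {ω | D ω = d}) := by
    intro d1 _ d2 _ hne
    refine Set.disjoint_left.2 ?_
    rintro ω ⟨_, h1⟩ ⟨_, h2⟩
    exact hne ((h1 : D ω = d1) ▸ (h2 : D ω = d2))
  rw [pr, h1, measure_biUnion_finset hdisj (fun d _ => hs.inter (hD d)),
    ENNReal.toReal_sum (fun d _ => measure_ne_top ν _)]
  rfl

lemma sum_pr_fiber {δ : Type*} [Fintype δ] {D : Ω → δ} (hD : MeasFibers D)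
    {s : Set Ω} (hs : MeasurableSet s) :
    ∑ d : δ, pr ν (s ∩ {ω | D ω = d}) = pr ν s := by
  rw [← pr_inter_mem_finset ν hD hs Finset.univ]
  simp

lemma sum_pr_eq_one {δ : Type*} [Fintype δ] {D : Ω → δ} (hD : MeasFibers D) :
    ∑ d : δ, pr ν {ω | D ω = d} = 1 := by
  have h := sum_pr_fiber ν hD (MeasurableSet.univ (α := Ω))
  simpa [pr_univ] using h

lemma pr_inter_comp_fiber {δ ε : Type*} [Fintype δ] [DecidableEq ε] {D : Ω → δ}
    (hD : MeasFibers D) {s : Set Ω} (hs : MeasurableSet s) (f : δ → ε) (e : ε) :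
    pr ν (s ∩ {ω | f (D ω) = e})
      = ∑ d ∈ Finset.univ.filter (fun d => f d = e), pr ν (s ∩ {ω | D ω = d}) := by
  rw [← pr_inter_mem_finset ν hD hs]
  congr 2
  ext ω
  simp

lemma pr_comp_fiber {δ ε : Type*} [Fintype δ] [DecidableEq ε] {D : Ω → δ}
    (hD : MeasFibers D) (f : δ → ε) (e : ε) :
    pr ν {ω | f (D ω) = e}
      = ∑ d ∈ Finset.univ.filter (fun d => f d = e), pr ν {ω | D ω = d} := by
  have h := pr_inter_comp_fiber ν hD MeasurableSet.univ f e
  simpa [Set.univ_inter] using h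

lemma measFibers_pair {α δ : Type*} {A : Ω → α} {D : Ω → δ}
    (hA : MeasFibers A) (hD : MeasFibers D) :
    MeasFibers (fun ω => (A ω, D ω)) := by
  intro p
  have h : {ω | (A ω, D ω) = p} = {ω | A ω = p.1} ∩ {ω | D ω = p.2} := by
    ext ω; simp [Prod.ext_iff]
  rw [h]; exact (hA _).inter (hD _)

lemma measFibers_comp {δ ε : Type*} [Fintype δ] {D : Ω → δ} (hD : MeasFibers D) (f : δ → ε) :
    MeasFibers (fun ω => f (D ω)) := by
  classical
  intro e
  have h : {ω | f (D ω) = e} = ⋃ d ∈ Finset.univ.filter (fun d => f d = e), {ω | D ω = d} := by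
    ext ω; simp
  rw [h]
  exact Finset.measurableSet_biUnion _ (fun d _ => hD d)

lemma measFibers_vec {𝒵 : Type*} {n : ℕ} {Z : ℕ → Ω → 𝒵} (hZ : ∀ i, MeasFibers (Z i))
    (off : Fin n → ℕ) :
    MeasFibers (fun ω => fun j : Fin n => Z (off j) ω) := by
  intro b
  have h : {ω | (fun j : Fin n => Z (off j) ω) = b} = ⋂ j : Fin n, {ω | Z (off j) ω = b j} := by
    ext ω; simp [funext_iff]
  rw [h]
  exact MeasurableSet.iInter (fun j => hZ _ _)

lemma measurableSet_preimage_fin {δ : Type*} [Fintype δ] {D : Ω → δ} (hD : MeasFibers D)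
    (S : Set δ) : MeasurableSet {ω | D ω ∈ S} := by
  classical
  have hSfin : S.Finite := Set.toFinite S
  have h : {ω | D ω ∈ S} = ⋃ d ∈ hSfin.toFinset, {ω | D ω = d} := by
    ext ω
    simp only [Set.mem_setOf_eq, Set.mem_iUnion, Set.Finite.mem_toFinset]
    constructor
    · intro h; exact ⟨D ω, h, rfl⟩
    · rintro ⟨d, hd, h⟩; exact h ▸ hd
  rw [h]
  exact Finset.measurableSet_biUnion _ (fun d _ => hD d)

lemma negMulLog_sum_le {ι : Type*} (F : Finset ι) (f : ι → ℝ) (hf : ∀ i ∈ F, 0 ≤ f i) :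
    Real.negMulLog (∑ i ∈ F, f i) ≤ ∑ i ∈ F, Real.negMulLog (f i) := by
  have hs : ∀ i ∈ F, f i ≤ ∑ j ∈ F, f j := fun i hi =>
    Finset.single_le_sum hf hi
  have h1 : Real.negMulLog (∑ i ∈ F, f i) = ∑ i ∈ F, (-(f i) * Real.log (∑ j ∈ F, f j)) := by
    rw [Real.negMulLog, ← Finset.sum_neg_distrib, Finset.sum_mul]
  rw [h1]
  refine Finset.sum_le_sum (fun i hi => ?_)
  rcases eq_or_lt_of_le (hf i hi) with h0 | h0
  · simp [← h0, Real.negMulLog]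
  · have hlog : Real.log (f i) ≤ Real.log (∑ j ∈ F, f j) := Real.log_le_log h0 (hs i hi)
    rw [Real.negMulLog, neg_mul]
    nlinarith [hlog, h0]

lemma entropy_comp_le {δ S : Type*} [Fintype δ] [Fintype S] {D : Ω → δ}
    (hD : MeasFibers D) (f : δ → S) :
    entropy ν (fun ω => f (D ω)) ≤ entropy ν D := by
  classical
  unfold entropy
  rw [← Finset.sum_fiberwise Finset.univ f (fun d => Real.negMulLog (pr ν {ω | D ω = d}))]
  refine Finset.sum_le_sum (fun e _ => ?_)
  rw [pr_comp_fiber ν hD f e]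
  exact negMulLog_sum_le _ _ (fun d _ => pr_nonneg ν _)

lemma sum_negMulLog_pair_le {S T : Type*} [Fintype S] [Fintype T] (q : S → T → ℝ)
    (hq : ∀ x y, 0 ≤ q x y) (hsum : ∑ x, ∑ y, q x y = 1) :
    ∑ x, ∑ y, Real.negMulLog (q x y)
      ≤ (∑ x, Real.negMulLog (∑ y, q x y)) + ∑ y, Real.negMulLog (∑ x, q x y) := by
  have hpnn : ∀ x, 0 ≤ ∑ y, q x y := fun x => Finset.sum_nonneg (fun y _ => hq x y)
  have hrnn : ∀ y, 0 ≤ ∑ x, q x y := fun y => Finset.sum_nonneg (fun x _ => hq x y)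
  have hqp : ∀ x y, q x y ≤ ∑ y', q x y' := fun x y =>
    Finset.single_le_sum (fun y' _ => hq x y') (Finset.mem_univ y)
  have hqr : ∀ x y, q x y ≤ ∑ x', q x' y := fun x y =>
    Finset.single_le_sum (fun x' _ => hq x' y) (Finset.mem_univ x)
  have h1 : ∀ x, Real.negMulLog (∑ y, q x y)
      = ∑ y, q x y * (-Real.log (∑ y', q x y')) := by
    intro x
    rw [← Finset.sum_mul, Real.negMulLog]
    ring
  have h2 : ∀ y, Real.negMulLog (∑ x, q x y)
      = ∑ x, q x y * (-Real.log (∑ x', q x' y)) := by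
    intro y
    rw [← Finset.sum_mul, Real.negMulLog]
    ring
  have hterm : ∀ x y, Real.negMulLog (q x y)
      ≤ q x y * (-Real.log (∑ y', q x y')) + q x y * (-Real.log (∑ x', q x' y))
        - q x y + (∑ y', q x y') * (∑ x', q x' y) := by
    intro x y
    rcases eq_or_lt_of_le (hq x y) with h0 | h0
    · rw [← h0]
      simp only [Real.negMulLog_zero, zero_mul, add_zero, zero_add, sub_zero]
      exact mul_nonneg (hpnn x) (hrnn y)
    · have hp0 : 0 < ∑ y', q x y' := lt_of_lt_of_le h0 (hqp x y)
      have hr0 : 0 < ∑ x', q x' y := lt_of_lt_of_le h0 (hqr x y)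
      have hlog := Real.log_le_sub_one_of_pos
        (show 0 < (∑ y', q x y') * (∑ x', q x' y) / q x y by positivity)
      rw [Real.log_div (by positivity) (ne_of_gt h0),
        Real.log_mul (ne_of_gt hp0) (ne_of_gt hr0)] at hlog
      have hcancel : q x y * ((∑ y', q x y') * (∑ x', q x' y) / q x y)
          = (∑ y', q x y') * (∑ x', q x' y) := by
        field_simp
      rw [Real.negMulLog]
      nlinarith [mul_le_mul_of_nonneg_left hlog (le_of_lt h0)]
  calc ∑ x, ∑ y, Real.negMulLog (q x y)
      ≤ ∑ x, ∑ y, (q x y * (-Real.log (∑ y', q x y')) + q x y * (-Real.log (∑ x', q x' y))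
        - q x y + (∑ y', q x y') * (∑ x', q x' y)) := by
        refine Finset.sum_le_sum (fun x _ => Finset.sum_le_sum (fun y _ => hterm x y))
    _ = (∑ x, Real.negMulLog (∑ y, q x y)) + (∑ y, Real.negMulLog (∑ x, q x y))
        - (∑ x, ∑ y, q x y) + (∑ x, ∑ y', q x y') * (∑ y, ∑ x', q x' y) := by
        simp only [Finset.sum_add_distrib, Finset.sum_sub_distrib]
        rw [← Finset.sum_mul_sum]
        congr 1
        congr 1
        congr 1
        · exact (Finset.sum_congr rfl (fun x _ => (h1 x).symm))
        · rw [Finset.sum_comm]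
          exact (Finset.sum_congr rfl (fun y _ => (h2 y).symm))
    _ = (∑ x, Real.negMulLog (∑ y, q x y)) + ∑ y, Real.negMulLog (∑ x, q x y) := by
        have hsum' : ∑ y, ∑ x', q x' y = 1 := by rw [Finset.sum_comm]; exact hsum
        rw [hsum, hsum']
        ring

lemma sum_negMulLog_le_log_card {S : Type*} (F : Finset S) (q : S → ℝ)
    (h0 : ∀ y ∈ F, 0 ≤ q y) (hsum : ∑ y ∈ F, q y = 1) :
    ∑ y ∈ F, Real.negMulLog (q y) ≤ Real.log F.card := by
  have hFne : F.Nonempty := by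
    by_contra h
    rw [Finset.not_nonempty_iff_eq_empty] at h
    rw [h] at hsum
    simp at hsum
  have hn : (1 : ℝ) ≤ (F.card : ℝ) := by
    have := Finset.card_pos.2 hFne
    exact_mod_cast this
  have hnpos : (0 : ℝ) < F.card := lt_of_lt_of_le one_pos hn
  have hterm : ∀ y ∈ F, Real.negMulLog (q y)
      ≤ 1 / (F.card : ℝ) - q y + q y * Real.log F.card := by
    intro y hy
    rcases eq_or_lt_of_le (h0 y hy) with hq0 | hq0
    · rw [← hq0]
      simp only [Real.negMulLog_zero, zero_mul, sub_zero, add_zero]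
      positivity
    · have hlog := Real.log_le_sub_one_of_pos
        (show 0 < 1 / ((F.card : ℝ) * q y) by positivity)
      rw [Real.log_div one_ne_zero (by positivity),
        Real.log_mul (ne_of_gt hnpos) (ne_of_gt hq0), Real.log_one] at hlog
      have hcancel : q y * (1 / ((F.card : ℝ) * q y)) = 1 / F.card := by
        field_simp
      rw [Real.negMulLog]
      nlinarith [mul_le_mul_of_nonneg_left hlog (le_of_lt hq0)]
  calc ∑ y ∈ F, Real.negMulLog (q y)
      ≤ ∑ y ∈ F, (1 / (F.card : ℝ) - q y + q y * Real.log F.card) :=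
        Finset.sum_le_sum hterm
    _ = (F.card : ℝ) * (1 / F.card) - 1 + 1 * Real.log F.card := by
        simp only [Finset.sum_add_distrib, Finset.sum_sub_distrib, Finset.sum_const,
          nsmul_eq_mul, hsum, ← Finset.sum_mul]
    _ = Real.log F.card := by
        field_simp
        ring

lemma entropy_pair_le_add {S T : Type*} [Fintype S] [Fintype T] {U : Ω → S} {V : Ω → T}
    (hU : MeasFibers U) (hV : MeasFibers V) :
    entropy ν (fun ω => (U ω, V ω)) ≤ entropy ν U + entropy ν V := by
  classical
  have hset : ∀ (x : S) (y : T),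
      {ω | (U ω, V ω) = (x, y)} = ({ω | U ω = x} ∩ {ω | V ω = y}) := by
    intro x y; ext ω; simp [Prod.ext_iff]
  have hpair : entropy ν (fun ω => (U ω, V ω))
      = ∑ x : S, ∑ y : T, Real.negMulLog (pr ν ({ω | U ω = x} ∩ {ω | V ω = y})) := by
    unfold entropy
    rw [Fintype.sum_prod_type]
    exact Finset.sum_congr rfl fun x _ => Finset.sum_congr rfl fun y _ =>
      congrArg Real.negMulLog (congrArg (pr ν) (hset x y))
  have hU' : entropy ν U
      = ∑ x, Real.negMulLog (∑ y, pr ν ({ω | U ω = x} ∩ {ω | V ω = y})) := by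
    unfold entropy
    exact Finset.sum_congr rfl fun x _ =>
      congrArg Real.negMulLog (sum_pr_fiber ν hV (hU x)).symm
  have hV' : entropy ν V
      = ∑ y, Real.negMulLog (∑ x, pr ν ({ω | U ω = x} ∩ {ω | V ω = y})) := by
    unfold entropy
    refine Finset.sum_congr rfl fun y _ => congrArg Real.negMulLog ?_
    rw [← sum_pr_fiber ν hU (hV y)]
    exact Finset.sum_congr rfl fun x _ => congrArg (pr ν) (Set.inter_comm _ _)
  have htot : ∑ x : S, ∑ y : T, pr ν ({ω | U ω = x} ∩ {ω | V ω = y}) = 1 := by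
    rw [← sum_pr_eq_one ν hU]
    exact Finset.sum_congr rfl fun x _ => sum_pr_fiber ν hV (hU x)
  rw [hpair, hU', hV']
  exact sum_negMulLog_pair_le _ (fun x y => pr_nonneg ν _) htot

lemma entropy_le_log_ncard_range {S : Type*} [Fintype S] {Y : Ω → S} (hY : MeasFibers Y) :
    entropy ν Y ≤ Real.log ((Set.range Y).ncard) := by
  classical
  have hfin : (Set.range Y).Finite := Set.toFinite _
  have hcard : (Set.range Y).ncard = hfin.toFinset.card := Set.ncard_eq_toFinset_card _ hfin
  have hzero : ∀ x, x ∉ hfin.toFinset → pr ν {ω | Y ω = x} = 0 := by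
    intro x hx
    have hempty : {ω | Y ω = x} = ∅ := by
      ext ω
      simp only [Set.mem_setOf_eq, Set.mem_empty_iff_false, iff_false]
      intro h
      exact hx (hfin.mem_toFinset.2 ⟨ω, h⟩)
    rw [hempty, pr]
    simp
  have hH : entropy ν Y = ∑ x ∈ hfin.toFinset, Real.negMulLog (pr ν {ω | Y ω = x}) := by
    unfold entropy
    rw [← Finset.sum_subset (Finset.subset_univ hfin.toFinset)]
    intro x _ hx
    rw [hzero x hx, Real.negMulLog_zero]
  have hsum : ∑ x ∈ hfin.toFinset, pr ν {ω | Y ω = x} = 1 := by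
    rw [Finset.sum_subset (Finset.subset_univ hfin.toFinset) (fun x _ hx => hzero x hx)]
    exact sum_pr_eq_one ν hY
  rw [hH, hcard]
  exact sum_negMulLog_le_log_card _ _ (fun y _ => pr_nonneg ν _) hsum

lemma entropy_pair_decomp {α δ : Type*} [Fintype α] [Fintype δ] {A : Ω → α} {D : Ω → δ}
    (hA : MeasFibers A) (hD : MeasFibers D) (h : α → δ → ℝ)
    (hprop : ∀ a d, pr ν ({ω | A ω = a} ∩ {ω | D ω = d}) = h a d * pr ν {ω | D ω = d}) :
    entropy ν (fun ω => (A ω, D ω))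
      = entropy ν D + ∑ d, pr ν {ω | D ω = d} * ∑ a, Real.negMulLog (h a d) := by
  classical
  have hset : ∀ (a : α) (d : δ),
      {ω | (A ω, D ω) = (a, d)} = ({ω | A ω = a} ∩ {ω | D ω = d}) := by
    intro a d; ext ω; simp [Prod.ext_iff]
  have hpair : entropy ν (fun ω => (A ω, D ω))
      = ∑ d : δ, ∑ a : α, Real.negMulLog (pr ν ({ω | A ω = a} ∩ {ω | D ω = d})) := by
    unfold entropy
    rw [Fintype.sum_prod_type, Finset.sum_comm]
    exact Finset.sum_congr rfl fun d _ => Finset.sum_congr rfl fun a _ =>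
      congrArg Real.negMulLog (congrArg (pr ν) (hset a d))
  have hone : ∀ d, pr ν {ω | D ω = d} ≠ 0 → ∑ a, h a d = 1 := by
    intro d hd
    have hs : ∑ a, pr ν ({ω | D ω = d} ∩ {ω | A ω = a}) = pr ν {ω | D ω = d} :=
      sum_pr_fiber ν hA (hD d)
    have hs' : (∑ a, h a d) * pr ν {ω | D ω = d} = pr ν {ω | D ω = d} := by
      rw [Finset.sum_mul]
      calc ∑ a, h a d * pr ν {ω | D ω = d}
          = ∑ a, pr ν ({ω | D ω = d} ∩ {ω | A ω = a}) :=
            Finset.sum_congr rfl fun a _ => by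
              rw [Set.inter_comm]; exact (hprop a d).symm
        _ = pr ν {ω | D ω = d} := hs
    exact mul_right_cancel₀ hd (by rw [hs', one_mul])
  have hinner : ∀ d, ∑ a, Real.negMulLog (pr ν ({ω | A ω = a} ∩ {ω | D ω = d}))
      = Real.negMulLog (pr ν {ω | D ω = d})
        + pr ν {ω | D ω = d} * ∑ a, Real.negMulLog (h a d) := by
    intro d
    by_cases hd : pr ν {ω | D ω = d} = 0
    · have hz : ∀ a, pr ν ({ω | A ω = a} ∩ {ω | D ω = d}) = 0 := fun a =>
        pr_eq_zero_of_subset ν Set.inter_subset_right hd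
      simp [hz, hd, Real.negMulLog_zero]
    · calc ∑ a, Real.negMulLog (pr ν ({ω | A ω = a} ∩ {ω | D ω = d}))
          = ∑ a, (pr ν {ω | D ω = d} * Real.negMulLog (h a d)
            + h a d * Real.negMulLog (pr ν {ω | D ω = d})) := by
            refine Finset.sum_congr rfl fun a _ => ?_
            rw [hprop a d, Real.negMulLog_mul]
      _ = Real.negMulLog (pr ν {ω | D ω = d})
            + pr ν {ω | D ω = d} * ∑ a, Real.negMulLog (h a d) := by
            rw [Finset.sum_add_distrib, ← Finset.mul_sum, ← Finset.sum_mul, hone d hd, one_mul]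
            ring
  rw [hpair, Finset.sum_congr rfl fun d _ => hinner d, Finset.sum_add_distrib]
  rfl

lemma entropy_comp_diff {α δ ε : Type*} [Fintype α] [Fintype δ] [Fintype ε]
    {A : Ω → α} {D : Ω → δ} (hA : MeasFibers A) (hD : MeasFibers D) (ψ : δ → ε)
    (hcross : ∀ a d, pr ν ({ω | A ω = a} ∩ {ω | D ω = d}) * pr ν {ω | ψ (D ω) = ψ d}
        = pr ν ({ω | A ω = a} ∩ {ω | ψ (D ω) = ψ d}) * pr ν {ω | D ω = d}) :
    entropy ν (fun ω => (A ω, D ω)) - entropy ν D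
      = entropy ν (fun ω => (A ω, ψ (D ω))) - entropy ν (fun ω => ψ (D ω)) := by
  classical
  set h : α → ε → ℝ := fun a e => condProb ν {ω | A ω = a} {ω | ψ (D ω) = e} with hh
  have fact1 : ∀ a e,
      pr ν ({ω | A ω = a} ∩ {ω | ψ (D ω) = e}) = h a e * pr ν {ω | ψ (D ω) = e} := by
    intro a e
    by_cases he : pr ν {ω | ψ (D ω) = e} = 0
    · rw [he, mul_zero]
      exact pr_eq_zero_of_subset ν Set.inter_subset_right he
    · rw [hh]
      unfold condProb
      rw [div_mul_cancel₀ _ he]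
  have fact2 : ∀ a d,
      pr ν ({ω | A ω = a} ∩ {ω | D ω = d}) = h a (ψ d) * pr ν {ω | D ω = d} := by
    intro a d
    by_cases he : pr ν {ω | ψ (D ω) = ψ d} = 0
    · have hd : pr ν {ω | D ω = d} = 0 := by
        refine pr_eq_zero_of_subset ν ?_ he
        intro ω hω
        simp only [Set.mem_setOf_eq] at *
        rw [hω]
      rw [hd, mul_zero]
      exact pr_eq_zero_of_subset ν Set.inter_subset_right (by rw [hd])
    · have hc := hcross a d
      rw [fact1 a (ψ d)] at hc
      have hc2 : pr ν ({ω | A ω = a} ∩ {ω | D ω = d}) * pr ν {ω | ψ (D ω) = ψ d}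
          = (h a (ψ d) * pr ν {ω | D ω = d}) * pr ν {ω | ψ (D ω) = ψ d} := by
        rw [hc]; ring
      exact mul_right_cancel₀ he hc2
  have e1 := entropy_pair_decomp ν hA hD (fun a d => h a (ψ d)) fact2
  have e2 := entropy_pair_decomp ν hA (measFibers_comp hD ψ) h fact1
  have e3 : ∑ d, pr ν {ω | D ω = d} * ∑ a, Real.negMulLog (h a (ψ d))
      = ∑ e, pr ν {ω | ψ (D ω) = e} * ∑ a, Real.negMulLog (h a e) := by
    rw [← Finset.sum_fiberwise Finset.univ ψ
      (fun d => pr ν {ω | D ω = d} * ∑ a, Real.negMulLog (h a (ψ d)))]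
    refine Finset.sum_congr rfl fun e _ => ?_
    rw [pr_comp_fiber ν hD ψ e, Finset.sum_mul]
    refine Finset.sum_congr rfl fun d hd => ?_
    have : ψ d = e := (Finset.mem_filter.1 hd).2
    rw [this]
  rw [e1, e2, e3]
  ring

lemma pr_cond {E : Set Ω} (hEm : MeasurableSet E) (μ : Measure Ω) (s : Set Ω) :
    pr (μ[|E]) s = ((μ E)⁻¹).toReal * pr μ (E ∩ s) := by
  rw [pr, cond_apply hEm, ENNReal.toReal_mul]
  rfl

lemma condProb_cond_of_subset {E G : Set Ω} (hEm : MeasurableSet E) (μ : Measure Ω)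
    [IsProbabilityMeasure μ] (hμE : μ E ≠ 0) (hGE : G ⊆ E) (s : Set Ω) :
    condProb (μ[|E]) s G = condProb μ s G := by
  have hc : ((μ E)⁻¹).toReal ≠ 0 := by
    rw [ENNReal.toReal_ne_zero]
    exact ⟨ENNReal.inv_ne_zero.2 (measure_ne_top μ E), ENNReal.inv_ne_top.2 hμE⟩
  unfold condProb
  rw [pr_cond hEm, pr_cond hEm]
  have h1 : E ∩ (s ∩ G) = s ∩ G := Set.inter_eq_right.2 (fun ω hω => hGE hω.2)
  have h2 : E ∩ G = G := Set.inter_eq_right.2 hGE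
  rw [h1, h2, mul_div_mul_left _ _ hc]

lemma cross_of_fiberwise {α δ ε : Type*} [Fintype δ] [DecidableEq ε]
    {A : Ω → α} {D : Ω → δ} (hA : MeasFibers A) (hD : MeasFibers D) (ψ : δ → ε)
    (hsym : ∀ (a : α) (d1 d2 : δ), ψ d1 = ψ d2 →
      pr ν ({ω | A ω = a} ∩ {ω | D ω = d1}) * pr ν {ω | D ω = d2}
        = pr ν ({ω | A ω = a} ∩ {ω | D ω = d2}) * pr ν {ω | D ω = d1}) :
    ∀ (a : α) (d : δ), pr ν ({ω | A ω = a} ∩ {ω | D ω = d}) * pr ν {ω | ψ (D ω) = ψ d}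
      = pr ν ({ω | A ω = a} ∩ {ω | ψ (D ω) = ψ d}) * pr ν {ω | D ω = d} := by
  intro a d
  rw [pr_comp_fiber ν hD ψ (ψ d), pr_inter_comp_fiber ν hD (hA a) ψ (ψ d),
    Finset.mul_sum, Finset.sum_mul]
  refine Finset.sum_congr rfl fun d' hd' => ?_
  exact hsym a d d' ((Finset.mem_filter.1 hd').2).symm

lemma memFold_congr {𝒵 M : Type*} (g : ℕ → 𝒵 → M → M) (y0 : M) (k : ℕ) :
    ∀ (m : ℕ) (hkm : k ≤ m) (zs1 zs2 : Fin m → 𝒵),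
      MemoryLens.memFold g y0 k (fun j => zs1 (Fin.castLE hkm j))
        = MemoryLens.memFold g y0 k (fun j => zs2 (Fin.castLE hkm j)) →
      (∀ (i : ℕ) (hi : i < m), k ≤ i → zs1 ⟨i, hi⟩ = zs2 ⟨i, hi⟩) →
      MemoryLens.memFold g y0 m zs1 = MemoryLens.memFold g y0 m zs2 := by
  intro m
  induction m with
  | zero =>
    intro hkm zs1 zs2 h1 h2
    rfl
  | succ m ih =>
    intro hkm zs1 zs2 h1 h2
    by_cases hk : k = m + 1
    · subst hk
      have e1 : (fun j => zs1 (Fin.castLE hkm j)) = zs1 := by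
        funext j; exact congrArg zs1 (Fin.ext rfl)
      have e2 : (fun j => zs2 (Fin.castLE hkm j)) = zs2 := by
        funext j; exact congrArg zs2 (Fin.ext rfl)
      rw [e1, e2] at h1
      exact h1
    · have hkm' : k ≤ m := by omega
      show g (m + 1) (zs1 (Fin.last m))
          (MemoryLens.memFold g y0 m (fun j => zs1 j.castSucc))
        = g (m + 1) (zs2 (Fin.last m))
          (MemoryLens.memFold g y0 m (fun j => zs2 j.castSucc))
      have hlast : zs1 (Fin.last m) = zs2 (Fin.last m) := h2 m (by omega) (by omega)
      rw [hlast]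
      congr 1
      apply ih hkm'
      · have e1 : (fun j => (fun j' : Fin m => zs1 j'.castSucc) (Fin.castLE hkm' j))
            = fun j => zs1 (Fin.castLE hkm j) := by
          funext j; exact congrArg zs1 (Fin.ext rfl)
        have e2 : (fun j => (fun j' : Fin m => zs2 j'.castSucc) (Fin.castLE hkm' j))
            = fun j => zs2 (Fin.castLE hkm j) := by
          funext j; exact congrArg zs2 (Fin.ext rfl)
        rw [e1, e2]
        exact h1
      · intro i hi hki
        have h := h2 i (by omega) hki
        have e1 : (⟨i, hi⟩ : Fin m).castSucc = (⟨i, by omega⟩ : Fin (m + 1)) := Fin.ext rfl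
        simpa [e1] using h

end MemoryLensAux
end MemoryLensAux

namespace MemoryLensAux

def glueFun {𝒵 : Type*} (k m : ℕ) (b : Fin k → 𝒵) (c : Fin (m - k) → 𝒵) : Fin m → 𝒵 :=
  fun i => if h : (i : ℕ) < k then b ⟨i, h⟩ else c ⟨(i : ℕ) - k, by have := i.isLt; omega⟩

lemma glueFun_lt {𝒵 : Type*} {k m : ℕ} (b : Fin k → 𝒵) (c : Fin (m - k) → 𝒵) (i : Fin m)
    (h : (i : ℕ) < k) : glueFun k m b c i = b ⟨i, h⟩ := dif_pos h

lemma glueFun_ge {𝒵 : Type*} {k m : ℕ} (b : Fin k → 𝒵) (c : Fin (m - k) → 𝒵) (i : Fin m)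
    (h : ¬ (i : ℕ) < k) (h2 : (i : ℕ) - k < m - k) :
    glueFun k m b c i = c ⟨(i : ℕ) - k, h2⟩ := dif_neg h

lemma memFold_glueFun {𝒵 M : Type*} (g : ℕ → 𝒵 → M → M) (y0 : M) (k m : ℕ) (hkm : k ≤ m)
    (b1 b2 : Fin k → 𝒵) (c : Fin (m - k) → 𝒵)
    (hb : MemoryLens.memFold g y0 k b1 = MemoryLens.memFold g y0 k b2) :
    MemoryLens.memFold g y0 m (glueFun k m b1 c)
      = MemoryLens.memFold g y0 m (glueFun k m b2 c) := by
  apply memFold_congr g y0 k m hkm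
  · have e : ∀ b : Fin k → 𝒵,
        (fun j => glueFun k m b c (Fin.castLE hkm j)) = b := by
      intro b
      funext j
      rw [glueFun_lt _ _ _ (by simpa using j.isLt)]
      exact congrArg b (Fin.ext (by simp))
    rw [e b1, e b2]
    exact hb
  · intro i hi hki
    rw [glueFun_ge _ _ _ (show ¬ i < k by omega) (show i - k < m - k by omega),
      glueFun_ge _ _ _ (show ¬ i < k by omega) (show i - k < m - k by omega)]

end MemoryLensAux

namespace MemoryLensAux
open MemoryLens

set_option maxHeartbeats 1000000 in
theorem main_aux
    {Ω α γ 𝒵 : Type*} [MeasurableSpace Ω]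
    [Fintype α] [Fintype γ] [Fintype 𝒵]
    (μ : MeasureTheory.Measure Ω) [MeasureTheory.IsProbabilityMeasure μ]
    (H t : ℕ) (ht : t ≤ H) (ht1 : 1 ≤ t)
    (A : Ω → α) (X : Ω → γ) (Z : ℕ → Ω → 𝒵)
    (hA : MemoryLens.MeasFibers A) (hX : MemoryLens.MeasFibers X)
    (hZ : ∀ i, MemoryLens.MeasFibers (Z i))
    (K : ℕ) (hK : 0 < K) (g : ℕ → 𝒵 → Fin K → Fin K)
    (hci : ∀ (a : α) (x : γ) (zs : Fin (t - 1) → 𝒵),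
      μ {ω | X ω = x ∧ (fun j : Fin (t - 1) => Z (1 + (j : ℕ)) ω) = zs} ≠ 0 →
      MemoryLens.condProb μ {ω | A ω = a}
          {ω | X ω = x ∧ (fun j : Fin (t - 1) => Z (1 + (j : ℕ)) ω) = zs}
        = MemoryLens.condProb μ {ω | A ω = a}
          {ω | X ω = x ∧
            MemoryLens.memState g Z ⟨0, hK⟩ (t - 1) ω = MemoryLens.memFold g ⟨0, hK⟩ (t - 1) zs})
    (E : Set Ω)
    (hE : ∃ S : Set ((Fin (t - 1) → 𝒵) × γ),
      E = {ω | ((fun j : Fin (t - 1) => Z (1 + (j : ℕ)) ω), X ω) ∈ S})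
    (hEpos : μ E ≠ 0) :
    ∀ k < t,
      MemoryLens.condMI (μ[|E]) A (fun ω => fun j : Fin k => Z (1 + (j : ℕ)) ω)
          (fun ω => (X ω, fun j : Fin (t - 1 - k) => Z (k + 1 + (j : ℕ)) ω))
        ≤ Real.log ((Set.range (MemoryLens.memState g Z ⟨0, hK⟩ k)).ncard) ∧
      Real.log ((Set.range (MemoryLens.memState g Z ⟨0, hK⟩ k)).ncard) ≤ Real.log K := by
  classical
  obtain ⟨S, hES⟩ := hE
  intro k hk
  have hkm : k ≤ t - 1 := by omega
  set y0 : Fin K := (⟨0, hK⟩ : Fin K) with hy0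
  set ν : Measure Ω := μ[|E] with hν
  set B : Ω → (Fin k → 𝒵) := fun ω => fun j : Fin k => Z (1 + (j : ℕ)) ω with hBdef
  set W : Ω → γ × (Fin (t - 1 - k) → 𝒵) :=
    fun ω => (X ω, fun j : Fin (t - 1 - k) => Z (k + 1 + (j : ℕ)) ω) with hWdef
  set Y : Ω → Fin K := MemoryLens.memState g Z y0 k with hYdef
  -- measurability
  have hBm : MeasFibers B := measFibers_vec hZ (fun j : Fin k => 1 + (j : ℕ))
  have hCm : MeasFibers (fun ω => fun j : Fin (t - 1 - k) => Z (k + 1 + (j : ℕ)) ω) :=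
    measFibers_vec hZ (fun j : Fin (t - 1 - k) => k + 1 + (j : ℕ))
  have hWm : MeasFibers W := measFibers_pair hX hCm
  have hYm : MeasFibers Y := measFibers_comp hBm (MemoryLens.memFold g y0 k)
  have hTm : MeasFibers (fun ω => (B ω, W ω)) := measFibers_pair hBm hWm
  have hZvecm : MeasFibers (fun ω => fun j : Fin (t - 1) => Z (1 + (j : ℕ)) ω) :=
    measFibers_vec hZ (fun j : Fin (t - 1) => 1 + (j : ℕ))
  have hEmeas : MeasurableSet E := by
    rw [hES]
    exact measurableSet_preimage_fin (measFibers_pair hZvecm hX) S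
  haveI hνP : IsProbabilityMeasure ν := cond_isProbabilityMeasure hEpos
  constructor
  · -- main bound
    -- the fiber description of T := (B, W)
    have hTfib : ∀ (b : Fin k → 𝒵) (x : γ) (c : Fin (t - 1 - k) → 𝒵),
        {ω | (B ω, W ω) = (b, x, c)}
          = {ω | X ω = x ∧
              (fun j : Fin (t - 1) => Z (1 + (j : ℕ)) ω) = glueFun k (t - 1) b c} := by
      intro b x c
      ext ω
      simp only [Set.mem_setOf_eq, Prod.mk.injEq]
      constructor
      · rintro ⟨hb, hw⟩
        have hx : X ω = x := congrArg Prod.fst hw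
        have hc : (fun j : Fin (t - 1 - k) => Z (k + 1 + (j : ℕ)) ω) = c :=
          congrArg Prod.snd hw
        refine ⟨hx, ?_⟩
        funext i
        by_cases hik : (i : ℕ) < k
        · rw [glueFun_lt _ _ _ hik, ← hb]
        · rw [glueFun_ge _ _ _ hik (by have := i.isLt; omega), ← hc]
          show Z (1 + (i : ℕ)) ω = Z (k + 1 + ((i : ℕ) - k)) ω
          congr 1
          omega
      · rintro ⟨hx, hz⟩
        have hb : B ω = b := by
          funext j
          have hlt : ((Fin.castLE hkm j : Fin (t - 1)) : ℕ) < k := by simpa using j.isLt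
          have h1 := congrFun hz (Fin.castLE hkm j)
          rw [glueFun_lt _ _ _ hlt] at h1
          exact h1.trans (congrArg b (Fin.ext (by simp)))
        have hc : (fun j : Fin (t - 1 - k) => Z (k + 1 + (j : ℕ)) ω) = c := by
          funext j
          have hjlt : k + (j : ℕ) < t - 1 := by have := j.isLt; omega
          have h1 := congrFun hz (⟨k + (j : ℕ), hjlt⟩ : Fin (t - 1))
          rw [glueFun_ge _ _ _ (show ¬ k + (j : ℕ) < k by omega)
            (show k + (j : ℕ) - k < t - 1 - k by have := j.isLt; omega)] at h1
          have e2 : c ⟨k + (j : ℕ) - k, by have := j.isLt; omega⟩ = c j :=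
            congrArg c (Fin.ext (by simp))
          rw [e2] at h1
          rw [show k + 1 + (j : ℕ) = 1 + (k + (j : ℕ)) by omega]
          exact h1
        refine ⟨hb, ?_⟩
        rw [← hx, ← hc]
    -- transferred conditional-independence
    have hcondeq : ∀ (x : γ) (b : Fin k → 𝒵) (c : Fin (t - 1 - k) → 𝒵) (a : α),
        pr ν {ω | (B ω, W ω) = (b, x, c)} ≠ 0 →
        condProb ν {ω | A ω = a} {ω | (B ω, W ω) = (b, x, c)}
          = condProb μ {ω | A ω = a}
              {ω | X ω = x ∧ MemoryLens.memState g Z y0 (t - 1) ω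
                = MemoryLens.memFold g y0 (t - 1) (glueFun k (t - 1) b c)} := by
      intro x b c a hne
      rw [hTfib b x c] at hne ⊢
      have hGE : {ω | X ω = x ∧
          (fun j : Fin (t - 1) => Z (1 + (j : ℕ)) ω) = glueFun k (t - 1) b c} ⊆ E := by
        by_cases hS : (glueFun k (t - 1) b c, x) ∈ S
        · intro ω hω
          rw [hES]
          obtain ⟨h1, h2⟩ := hω
          show ((fun j : Fin (t - 1) => Z (1 + (j : ℕ)) ω), X ω) ∈ S
          rw [h1, h2]
          exact hS
        · exfalso
          apply hne
          have hdisj : E ∩ {ω | X ω = x ∧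
              (fun j : Fin (t - 1) => Z (1 + (j : ℕ)) ω) = glueFun k (t - 1) b c} = ∅ := by
            ext ω
            simp only [Set.mem_inter_iff, Set.mem_setOf_eq, Set.mem_empty_iff_false, iff_false,
              not_and]
            intro hωE h1 h2
            rw [hES] at hωE
            simp only [Set.mem_setOf_eq] at hωE
            rw [h2, h1] at hωE
            exact hS hωE
          rw [hν, pr_cond hEmeas, hdisj]
          simp [MemoryLens.pr]
      have hμG : μ {ω | X ω = x ∧
          (fun j : Fin (t - 1) => Z (1 + (j : ℕ)) ω) = glueFun k (t - 1) b c} ≠ 0 := by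
        intro h0
        apply hne
        rw [hν, pr_cond hEmeas, Set.inter_eq_right.2 hGE]
        unfold MemoryLens.pr
        rw [h0]
        simp
      rw [hν, condProb_cond_of_subset hEmeas μ hEpos hGE]
      exact hci a x (glueFun k (t - 1) b c) hμG
    -- symmetric cross-proportionality
    have hsym : ∀ (a : α) (d1 d2 : (Fin k → 𝒵) × (γ × (Fin (t - 1 - k) → 𝒵))),
        (fun p : (Fin k → 𝒵) × (γ × (Fin (t - 1 - k) → 𝒵)) =>
          (MemoryLens.memFold g y0 k p.1, p.2)) d1
          = (fun p : (Fin k → 𝒵) × (γ × (Fin (t - 1 - k) → 𝒵)) =>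
          (MemoryLens.memFold g y0 k p.1, p.2)) d2 →
        pr ν ({ω | A ω = a} ∩ {ω | (B ω, W ω) = d1}) * pr ν {ω | (B ω, W ω) = d2}
          = pr ν ({ω | A ω = a} ∩ {ω | (B ω, W ω) = d2}) * pr ν {ω | (B ω, W ω) = d1} := by
      intro a d1 d2 hψ
      obtain ⟨b1, x1, c1⟩ := d1
      obtain ⟨b2, x2, c2⟩ := d2
      simp only [Prod.mk.injEq] at hψ
      obtain ⟨hφ, hx, hc⟩ := hψ
      subst hx
      subst hc
      by_cases hz1 : pr ν {ω | (B ω, W ω) = (b1, x1, c1)} = 0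
      · rw [pr_eq_zero_of_subset ν Set.inter_subset_right hz1, hz1]
        ring
      by_cases hz2 : pr ν {ω | (B ω, W ω) = (b2, x1, c1)} = 0
      · rw [pr_eq_zero_of_subset ν Set.inter_subset_right hz2, hz2]
        ring
      have h1 := hcondeq x1 b1 c1 a hz1
      have h2 := hcondeq x1 b2 c1 a hz2
      have hsets : {ω | X ω = x1 ∧ MemoryLens.memState g Z y0 (t - 1) ω
            = MemoryLens.memFold g y0 (t - 1) (glueFun k (t - 1) b1 c1)}
          = {ω | X ω = x1 ∧ MemoryLens.memState g Z y0 (t - 1) ω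
            = MemoryLens.memFold g y0 (t - 1) (glueFun k (t - 1) b2 c1)} := by
        rw [memFold_glueFun g y0 k (t - 1) hkm b1 b2 c1 hφ]
      rw [hsets] at h1
      have hcp := h1.trans h2.symm
      unfold MemoryLens.condProb at hcp
      rw [div_eq_div_iff hz1 hz2] at hcp
      exact hcp
    have hcross := cross_of_fiberwise ν hA hTm
      (fun p : (Fin k → 𝒵) × (γ × (Fin (t - 1 - k) → 𝒵)) =>
        (MemoryLens.memFold g y0 k p.1, p.2)) hsym
    have key : entropy ν (fun ω => (A ω, B ω, W ω)) - entropy ν (fun ω => (B ω, W ω))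
        = entropy ν (fun ω => (A ω, Y ω, W ω)) - entropy ν (fun ω => (Y ω, W ω)) :=
      entropy_comp_diff ν hA hTm
        (fun p : (Fin k → 𝒵) × (γ × (Fin (t - 1 - k) → 𝒵)) =>
          (MemoryLens.memFold g y0 k p.1, p.2)) hcross
    have m1 : entropy ν (fun ω => (A ω, W ω)) ≤ entropy ν (fun ω => (A ω, Y ω, W ω)) :=
      entropy_comp_le ν (measFibers_pair hA (measFibers_pair hYm hWm))
        (fun p : α × (Fin K × (γ × (Fin (t - 1 - k) → 𝒵))) => (p.1, p.2.2))
    have m2 : entropy ν (fun ω => (Y ω, W ω)) ≤ entropy ν Y + entropy ν W :=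
      entropy_pair_le_add ν hYm hWm
    have m3 : entropy ν Y ≤ Real.log ((Set.range Y).ncard) :=
      entropy_le_log_ncard_range ν hYm
    show entropy ν (fun ω => (A ω, W ω)) + entropy ν (fun ω => (B ω, W ω))
        - entropy ν (fun ω => (A ω, B ω, W ω)) - entropy ν W
      ≤ Real.log ((Set.range Y).ncard)
    linarith [key, m1, m2, m3]
  · -- cardinality bound
    have hΩ : Nonempty Ω := by
      rcases isEmpty_or_nonempty Ω with hemp | hne
      · exfalso
        have h1 : μ (Set.univ : Set Ω) = 1 := measure_univ
        rw [Set.univ_eq_empty_iff.2 hemp, measure_empty] at h1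
        exact zero_ne_one h1
      · exact hne
    have hne : (Set.range Y).Nonempty := Set.range_nonempty _
    have hfin : (Set.range Y).Finite := Set.toFinite _
    have hpos : 0 < (Set.range Y).ncard := (Set.ncard_pos hfin).2 hne
    have hle : (Set.range Y).ncard ≤ K := by
      have h1 := Set.ncard_le_ncard (Set.subset_univ (Set.range Y)) (Set.toFinite _)
      simpa [Set.ncard_univ] using h1
    exact Real.log_le_log (by exact_mod_cast hpos) (by exact_mod_cast hle)

end MemoryLensAux


/-- Theorem 1: memory lower bound with event restriction. Let
`E ∈ σ(Z_{1:t-1}, X_t)` be an event of positive probability and `P_E` the measure `P`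
conditioned on `E`. If the action `A_t` is conditionally independent (under `P`) of the history
`Z_{1:t-1}` given `(X_t, Y_{t-1})`, where `Y_0 = 1`, `Y_j = g(j, Z_j, Y_{j-1})` for a memory
function `g` with capacity `K`, then for every `k < t`:
`I_E(A_t; Z_{1:k} | X_t, Z_{k+1:t-1}) ≤ log |Y_k(Ω)| ≤ log K`. -/
theorem memory_lens_lower_bound_event_restriction
    {Ω α γ 𝒵 : Type*} [MeasurableSpace Ω]
    [Fintype α] [Fintype γ] [Fintype 𝒵]
    (μ : MeasureTheory.Measure Ω) [MeasureTheory.IsProbabilityMeasure μ]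
    (H t : ℕ) (ht : t ≤ H) (ht1 : 1 ≤ t)
    (A : Ω → α) (X : Ω → γ) (Z : ℕ → Ω → 𝒵)
    (hA : MemoryLens.MeasFibers A) (hX : MemoryLens.MeasFibers X)
    (hZ : ∀ i, MemoryLens.MeasFibers (Z i))
    (K : ℕ) (hK : 0 < K) (g : ℕ → 𝒵 → Fin K → Fin K)
    (hci : ∀ (a : α) (x : γ) (zs : Fin (t - 1) → 𝒵),
      μ {ω | X ω = x ∧ (fun j : Fin (t - 1) => Z (1 + (j : ℕ)) ω) = zs} ≠ 0 →
      MemoryLens.condProb μ {ω | A ω = a}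
          {ω | X ω = x ∧ (fun j : Fin (t - 1) => Z (1 + (j : ℕ)) ω) = zs}
        = MemoryLens.condProb μ {ω | A ω = a}
          {ω | X ω = x ∧
            MemoryLens.memState g Z ⟨0, hK⟩ (t - 1) ω = MemoryLens.memFold g ⟨0, hK⟩ (t - 1) zs})
    (E : Set Ω)
    (hE : ∃ S : Set ((Fin (t - 1) → 𝒵) × γ),
      E = {ω | ((fun j : Fin (t - 1) => Z (1 + (j : ℕ)) ω), X ω) ∈ S})
    (hEpos : μ E ≠ 0) :
    ∀ k < t,
      MemoryLens.condMI (μ[|E]) A (fun ω => fun j : Fin k => Z (1 + (j : ℕ)) ω)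
          (fun ω => (X ω, fun j : Fin (t - 1 - k) => Z (k + 1 + (j : ℕ)) ω))
        ≤ Real.log ((Set.range (MemoryLens.memState g Z ⟨0, hK⟩ k)).ncard) ∧
      Real.log ((Set.range (MemoryLens.memState g Z ⟨0, hK⟩ k)).ncard) ≤ Real.log K := by
  exact MemoryLensAux.main_aux μ H t ht ht1 A X Z hA hX hZ K hK g hci E hE hEpos
end
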